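/- arXiv:0801.4384 — 4 statements merged into one kernel-verified Lean document; each statement's English description precedes it below -/
import Mathlib

section
/- If A is quasi-positive, A ≤ B entrywise, and A ≠ B, then for every t > 0 we have 0 ≤ e^{tA} ≤ e^{tB} entrywise and e^{tA} ≠ e^{tB}. -/
open Matrix

/-- The matrix exponential over the reals. -/
noncomputable def mexp {n : ℕ} (A : Matrix (Fin n) (Fin n) ℝ) : Matrix (Fin n) (Fin n) ℝ :=
  NormedSpace.exp A

/-- Spectral radius of a real matrix: largest modulus of its (complex) eigenvalues. -/
noncomputable def specRad {n : ℕ} (A : Matrix (Fin n) (Fin n) ℝ) : ENNReal :=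
  spectralRadius ℂ (A.map (Complex.ofReal))

/-- The matrix `A(e)` of the within-host HIV model with RT-inhibitor efficiency `e`. -/
noncomputable def Amat (β γ k T₀ N : ℝ) (e : ℝ) : Matrix (Fin 2) (Fin 2) ℝ :=
  !![-β, k * (1 - e) * T₀; N * β, -γ]

/-- The monodromy matrix `Φ(e,p)` for bang-bang periodic treatment. -/
noncomputable def Phi (β γ k T₀ N τ : ℝ) (e p : ℝ) : Matrix (Fin 2) (Fin 2) ℝ :=
  mexp ((τ - p) • Amat β γ k T₀ N 0) * mexp (p • Amat β γ k T₀ N e)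

section ExpMonoAuxSection

attribute [local instance] Matrix.linftyOpNormedRing Matrix.linftyOpNormedAlgebra

namespace ExpMonoAux

variable {n : ℕ}

/-- entry evaluation as a linear map -/
noncomputable def entryCLM (i j : Fin n) : Matrix (Fin n) (Fin n) ℝ →L[ℝ] ℝ :=
  LinearMap.toContinuousLinearMap
    { toFun := fun M => M i j
      map_add' := fun _ _ => rfl
      map_smul' := fun _ _ => rfl }

lemma exp_apply (M : Matrix (Fin n) (Fin n) ℝ) (i j : Fin n) :
    NormedSpace.exp M i j = ∑' k : ℕ, (k.factorial : ℝ)⁻¹ * (M ^ k) i j := by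
  have h := (entryCLM i j).map_tsum (NormedSpace.expSeries_summable' (𝕂 := ℝ) M)
  have : NormedSpace.exp M i j = entryCLM i j (∑' k : ℕ, (k.factorial : ℝ)⁻¹ • M ^ k) := by
    rw [NormedSpace.exp_eq_tsum ℝ]
    rfl
  rw [this, h]
  simp [entryCLM, LinearMap.toContinuousLinearMap]
  rfl

lemma summable_entry (M : Matrix (Fin n) (Fin n) ℝ) (i j : Fin n) :
    Summable fun k : ℕ => (k.factorial : ℝ)⁻¹ * (M ^ k) i j := by
  have h := ((NormedSpace.expSeries_summable' (𝕂 := ℝ) M).map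
    (entryCLM i j).toLinearMap.toAddMonoidHom (entryCLM i j).continuous)
  exact h

lemma pow_entry_nonneg {M : Matrix (Fin n) (Fin n) ℝ} (hM : ∀ i j, 0 ≤ M i j) (k : ℕ) :
    ∀ i j, 0 ≤ (M ^ k) i j := by
  induction k with
  | zero => intro i j; rw [pow_zero, Matrix.one_apply]; positivity
  | succ k ih =>
    intro i j
    rw [pow_succ, Matrix.mul_apply]
    exact Finset.sum_nonneg fun l _ => mul_nonneg (ih i l) (hM l j)

lemma pow_entry_mono {M N : Matrix (Fin n) (Fin n) ℝ} (hM : ∀ i j, 0 ≤ M i j)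
    (hN : ∀ i j, 0 ≤ N i j) (hMN : ∀ i j, M i j ≤ N i j) (k : ℕ) :
    ∀ i j, (M ^ k) i j ≤ (N ^ k) i j := by
  induction k with
  | zero => intro i j; rw [pow_zero, pow_zero]
  | succ k ih =>
    intro i j
    rw [pow_succ, pow_succ, Matrix.mul_apply, Matrix.mul_apply]
    exact Finset.sum_le_sum fun l _ =>
      mul_le_mul (ih i l) (hMN l j) (hM l j) (pow_entry_nonneg hN k i l)

lemma exp_entry_nonneg {M : Matrix (Fin n) (Fin n) ℝ} (hM : ∀ i j, 0 ≤ M i j) (i j : Fin n) :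
    0 ≤ NormedSpace.exp M i j := by
  rw [exp_apply]
  exact tsum_nonneg fun k => mul_nonneg (by positivity) (pow_entry_nonneg hM k i j)

lemma exp_entry_mono {M N : Matrix (Fin n) (Fin n) ℝ} (hM : ∀ i j, 0 ≤ M i j)
    (hN : ∀ i j, 0 ≤ N i j) (hMN : ∀ i j, M i j ≤ N i j) (i j : Fin n) :
    NormedSpace.exp M i j ≤ NormedSpace.exp N i j := by
  rw [exp_apply, exp_apply]
  exact Summable.tsum_le_tsum
    (fun k => mul_le_mul_of_nonneg_left (pow_entry_mono hM hN hMN k i j) (by positivity))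
    (summable_entry M i j) (summable_entry N i j)

lemma exp_entry_strict {M N : Matrix (Fin n) (Fin n) ℝ} (hM : ∀ i j, 0 ≤ M i j)
    (hN : ∀ i j, 0 ≤ N i j) (hMN : ∀ i j, M i j ≤ N i j) {i j : Fin n}
    (hlt : M i j < N i j) :
    NormedSpace.exp M i j < NormedSpace.exp N i j := by
  rw [exp_apply, exp_apply]
  refine Summable.tsum_lt_tsum (i := 1)
    (fun k => mul_le_mul_of_nonneg_left (pow_entry_mono hM hN hMN k i j) (by positivity))
    ?_ (summable_entry M i j) (summable_entry N i j)
  simpa using hlt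

lemma exp_shift (X : Matrix (Fin n) (Fin n) ℝ) (r : ℝ) :
    NormedSpace.exp (X + r • (1 : Matrix (Fin n) (Fin n) ℝ)) =
      Real.exp r • NormedSpace.exp X := by
  have hcomm : Commute X (r • (1 : Matrix (Fin n) (Fin n) ℝ)) :=
    (Commute.one_right X).smul_right r
  rw [Matrix.exp_add_of_commute _ _ hcomm]
  have h1 : (r • (1 : Matrix (Fin n) (Fin n) ℝ)) = Matrix.diagonal (fun _ => r) := by
    ext i j
    by_cases h : i = j <;> simp [Matrix.one_apply, Matrix.diagonal_apply, h]
  rw [h1, Matrix.exp_diagonal, Pi.exp_def, ← Real.exp_eq_exp_ℝ]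
  have h2 : Matrix.diagonal (fun _ : Fin n => Real.exp r) =
      Real.exp r • (1 : Matrix (Fin n) (Fin n) ℝ) := by
    ext i j
    by_cases h : i = j <;> simp [Matrix.one_apply, Matrix.diagonal_apply, h]
  rw [h2, mul_smul_comm, mul_one]

end ExpMonoAux

end ExpMonoAuxSection

/-- If `A` is quasi-positive, `A ≤ B` entrywise and `A ≠ B`, then for every `t > 0`
we have `0 ≤ e^{tA} ≤ e^{tB}` entrywise and `e^{tA} ≠ e^{tB}`. -/
theorem exp_mono_of_quasipositive {n : ℕ} (A B : Matrix (Fin n) (Fin n) ℝ)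
    (hA : ∀ i j, i ≠ j → 0 ≤ A i j) (hAB : ∀ i j, A i j ≤ B i j) (hne : A ≠ B) :
    ∀ t : ℝ, 0 < t →
      (∀ i j, 0 ≤ mexp (t • A) i j) ∧ (∀ i j, mexp (t • A) i j ≤ mexp (t • B) i j) ∧
        mexp (t • A) ≠ mexp (t • B) := by
  intro t ht
  obtain ⟨i₀, j₀, hij⟩ : ∃ i j, A i j < B i j := by
    by_contra h
    push_neg at h
    exact hne (by ext i j; exact le_antisymm (hAB i j) (h i j))
  set c : ℝ := ∑ i, |A i i| with hc_def
  have hc : ∀ i, 0 ≤ A i i + c := by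
    intro i
    have h1 : |A i i| ≤ c :=
      Finset.single_le_sum (f := fun i => |A i i|) (fun _ _ => abs_nonneg _) (Finset.mem_univ i)
    have := neg_abs_le (A i i)
    linarith
  set M : Matrix (Fin n) (Fin n) ℝ := t • A + (t * c) • 1 with hM_def
  set N : Matrix (Fin n) (Fin n) ℝ := t • B + (t * c) • 1 with hN_def
  have hM0 : ∀ i j, 0 ≤ M i j := by
    intro i j
    by_cases h : i = j
    · subst h
      have := hc i
      simp only [hM_def, Matrix.add_apply, Matrix.smul_apply, Matrix.one_apply_eq, smul_eq_mul,
        mul_one]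
      nlinarith
    · simp only [hM_def, Matrix.add_apply, Matrix.smul_apply, Matrix.one_apply_ne h, smul_eq_mul,
        mul_zero, add_zero]
      exact mul_nonneg ht.le (hA i j h)
  have hABle : ∀ i j, M i j ≤ N i j := by
    intro i j
    simp only [hM_def, hN_def, Matrix.add_apply, Matrix.smul_apply, smul_eq_mul]
    have := hAB i j
    nlinarith
  have hN0 : ∀ i j, 0 ≤ N i j := fun i j => le_trans (hM0 i j) (hABle i j)
  have hlt : M i₀ j₀ < N i₀ j₀ := by
    simp only [hM_def, hN_def, Matrix.add_apply, Matrix.smul_apply, smul_eq_mul]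
    nlinarith
  have hexpA : mexp (t • A) = Real.exp (-(t * c)) • NormedSpace.exp M := by
    have h := ExpMonoAux.exp_shift (t • A) (t * c)
    rw [← hM_def] at h
    show NormedSpace.exp (t • A) = _
    rw [h, smul_smul, ← Real.exp_add]
    simp
  have hexpB : mexp (t • B) = Real.exp (-(t * c)) • NormedSpace.exp N := by
    have h := ExpMonoAux.exp_shift (t • B) (t * c)
    rw [← hN_def] at h
    show NormedSpace.exp (t • B) = _
    rw [h, smul_smul, ← Real.exp_add]
    simp
  have hepos : (0:ℝ) < Real.exp (-(t * c)) := Real.exp_pos _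
  refine ⟨?_, ?_, ?_⟩
  · intro i j
    rw [hexpA]
    exact mul_nonneg hepos.le (ExpMonoAux.exp_entry_nonneg hM0 i j)
  · intro i j
    rw [hexpA, hexpB]
    exact mul_le_mul_of_nonneg_left (ExpMonoAux.exp_entry_mono hM0 hN0 hABle i j) hepos.le
  · have hstrict : mexp (t • A) i₀ j₀ < mexp (t • B) i₀ j₀ := by
      rw [hexpA, hexpB]
      exact (mul_lt_mul_iff_right₀ hepos).mpr (ExpMonoAux.exp_entry_strict hM0 hN0 hABle hlt)
    intro heq
    rw [heq] at hstrict
    exact lt_irrefl _ hstrict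
end

section
/- Define Φ(e,p) = e^{(τ-p)A(0)} e^{pA(e)} where A(e) = [[-β, k(1-e)T₀],[Nβ, -γ]] with positive parameters and τ > 0 fixed. Then for 0 ≤ e < e' ≤ 1 and p ∈ (0,τ], the spectral radius satisfies ρ(Φ(e',p)) < ρ(Φ(e,p)). -/
open Matrix

open NormedSpace

abbrev M2 := Matrix (Fin 2) (Fin 2) ℝ


theorem entry_exp (X : M2) (i j : Fin 2) :
    NormedSpace.exp X i j = ∑' n : ℕ, ((n.factorial :ℝ))⁻¹ * ((X^n) i j) := by
  letI : SeminormedRing M2 := Matrix.linftyOpSemiNormedRing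
  letI : NormedRing M2 := Matrix.linftyOpNormedRing
  letI : NormedAlgebra ℝ M2 := Matrix.linftyOpNormedAlgebra
  have hs : Summable (fun n : ℕ => ((n.factorial:ℝ))⁻¹ • X^n) := expSeries_summable' X
  have h1 : NormedSpace.exp X = ∑' n : ℕ, ((n.factorial:ℝ))⁻¹ • X^n := by
    rw [exp_eq_tsum ℝ]
  rw [h1]; erw [tsum_apply hs, tsum_apply ((Pi.summable.mp hs) i)]
  simp [Matrix.smul_apply]

theorem summable_entry (X : M2) (i j : Fin 2) :
    Summable (fun n : ℕ => ((n.factorial :ℝ))⁻¹ * ((X^n) i j)) := by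
  letI : SeminormedRing M2 := Matrix.linftyOpSemiNormedRing
  letI : NormedRing M2 := Matrix.linftyOpNormedRing
  letI : NormedAlgebra ℝ M2 := Matrix.linftyOpNormedAlgebra
  have hs : Summable (fun n : ℕ => ((n.factorial:ℝ))⁻¹ • X^n) := expSeries_summable' X
  have h2 := (Pi.summable.mp ((Pi.summable.mp hs) i)) j
  simpa [Matrix.smul_apply] using h2

theorem pow_entry_nonneg_mono {X Y : M2} (hY : ∀ i j, 0 ≤ Y i j)
    (hYX : ∀ i j, Y i j ≤ X i j) (n : ℕ) (i j : Fin 2) :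
    0 ≤ (Y^n) i j ∧ (Y^n) i j ≤ (X^n) i j := by
  induction n generalizing i j with
  | zero => simp [Matrix.one_apply]; positivity
  | succ n ih =>
    have hX : ∀ i j, 0 ≤ X i j := fun i j => le_trans (hY i j) (hYX i j)
    rw [pow_succ, pow_succ, Matrix.mul_apply, Matrix.mul_apply, Fin.sum_univ_two,
      Fin.sum_univ_two]
    have h0 := (ih i 0).1; have h1 := (ih i 1).1
    have h0' := (ih i 0).2; have h1' := (ih i 1).2
    have g0 := hY 0 j; have g1 := hY 1 j
    constructor
    · positivity
    · have := hYX 0 j; have := hYX 1 j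
      nlinarith [mul_le_mul h0' (hYX 0 j) g0 (le_trans h0 h0'),
        mul_le_mul h1' (hYX 1 j) g1 (le_trans h1 h1')]

theorem exp_entry_nonneg {Y : M2} (hY : ∀ i j, 0 ≤ Y i j) (i j : Fin 2) :
    0 ≤ NormedSpace.exp Y i j := by
  rw [entry_exp]
  refine tsum_nonneg fun n => ?_
  have := (pow_entry_nonneg_mono hY (fun i j => le_refl _) n i j).1
  positivity

theorem exp_entry_diag {Y : M2} (hY : ∀ i j, 0 ≤ Y i j) (i : Fin 2) :
    1 ≤ NormedSpace.exp Y i i := by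
  rw [entry_exp]
  have h := Summable.le_tsum (summable_entry Y i i) 0 (fun n _ => by
    have := (pow_entry_nonneg_mono hY (fun i j => le_refl _) n i i).1
    positivity)
  simpa [Matrix.one_apply] using h

theorem exp_entry_mono {X Y : M2} (hY : ∀ i j, 0 ≤ Y i j)
    (hYX : ∀ i j, Y i j ≤ X i j) (i j : Fin 2) :
    NormedSpace.exp Y i j ≤ NormedSpace.exp X i j := by
  rw [entry_exp, entry_exp]
  refine Summable.tsum_le_tsum (fun n => ?_) (summable_entry Y i j) (summable_entry X i j)
  have := (pow_entry_nonneg_mono hY hYX n i j).2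
  have h2 : (0:ℝ) ≤ (n.factorial:ℝ)⁻¹ := by positivity
  exact mul_le_mul_of_nonneg_left this h2

theorem exp_entry_strict_mono {X Y : M2} (hY : ∀ i j, 0 ≤ Y i j)
    (hYX : ∀ i j, Y i j ≤ X i j) {i j : Fin 2} {n₀ : ℕ}
    (hstrict : (Y^n₀) i j < (X^n₀) i j) :
    NormedSpace.exp Y i j < NormedSpace.exp X i j := by
  rw [entry_exp, entry_exp]
  refine Summable.tsum_lt_tsum_of_nonneg (i := n₀) (fun n => ?_) (fun n => ?_) ?_ (summable_entry X i j)
  · have := (pow_entry_nonneg_mono hY (fun i j => le_refl _) n i j).1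
    positivity
  · have := (pow_entry_nonneg_mono hY hYX n i j).2
    have h2 : (0:ℝ) ≤ (n.factorial:ℝ)⁻¹ := by positivity
    exact mul_le_mul_of_nonneg_left this h2
  · have h2 : (0:ℝ) < (n₀.factorial:ℝ)⁻¹ := by positivity
    exact mul_lt_mul_of_pos_left hstrict h2

theorem exp_smul_one (m : ℝ) : NormedSpace.exp (m • (1:M2)) = Real.exp m • (1:M2) := by
  letI : SeminormedRing M2 := Matrix.linftyOpSemiNormedRing
  letI : NormedRing M2 := Matrix.linftyOpNormedRing
  letI : NormedAlgebra ℝ M2 := Matrix.linftyOpNormedAlgebra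
  have h := (algebraMap_exp_comm (𝕂 := ℝ) (𝔸 := M2) m).symm
  rw [Real.exp_eq_exp_ℝ]
  simp [Algebra.algebraMap_eq_smul_one] at h
  exact h

theorem exp_split (X : M2) (r : ℝ) :
    NormedSpace.exp (r • (1:M2) + X) = Real.exp r • NormedSpace.exp X := by
  rw [Matrix.exp_add_of_commute _ _ ((Commute.one_left X).smul_left r), exp_smul_one,
    Matrix.smul_mul, Matrix.one_mul]
theorem exp_idem {P : M2} (hP : P * P = P) (a : ℝ) :
    NormedSpace.exp (a • P) = 1 + (Real.exp a - 1) • P := by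
  letI : SeminormedRing M2 := Matrix.linftyOpSemiNormedRing
  letI : NormedRing M2 := Matrix.linftyOpNormedRing
  letI : NormedAlgebra ℝ M2 := Matrix.linftyOpNormedAlgebra
  have hpow : ∀ n : ℕ, P ^ (n+1) = P := by
    intro n
    induction n with
    | zero => simp
    | succ n ih => rw [pow_succ, ih, hP]
  have hs : Summable (fun n : ℕ => ((n.factorial:ℝ))⁻¹ • (a • P)^n) := expSeries_summable' _
  have h1 : NormedSpace.exp (a • P) = ∑' n : ℕ, ((n.factorial:ℝ))⁻¹ • (a • P)^n := by
    rw [exp_eq_tsum ℝ]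
  rw [h1, Summable.tsum_eq_zero_add hs]
  have h2 : ∀ n : ℕ, ((((n+1).factorial:ℝ))⁻¹ • (a • P)^(n+1)) =
      (a^(n+1) / (n+1).factorial) • P := by
    intro n
    rw [smul_pow, hpow, smul_smul]
    congr 1
    field_simp
  simp only [h2, pow_zero, Nat.factorial_zero]
  have hsr : Summable (fun n : ℕ => a^(n+1) / ((n+1).factorial : ℝ)) := by
    have := Real.summable_pow_div_factorial a
    exact ((summable_nat_add_iff 1).mpr this)
  rw [Summable.tsum_smul_const hsr]
  have hval : (∑' n : ℕ, a^(n+1) / ((n+1).factorial : ℝ)) = Real.exp a - 1 := by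
    have hexp : Real.exp a = ∑' n : ℕ, a^n / (n.factorial : ℝ) := by
      rw [Real.exp_eq_exp_ℝ, exp_eq_tsum_div]
    have := Summable.tsum_eq_zero_add (Real.summable_pow_div_factorial a)
    rw [← hexp] at this
    simp only [pow_zero, Nat.factorial_zero, Nat.cast_one] at this
    linarith
  rw [hval]
  simp

theorem exp_sq_zero {B : M2} (hB : B * B = 0) :
    NormedSpace.exp B = 1 + B := by
  letI : SeminormedRing M2 := Matrix.linftyOpSemiNormedRing
  letI : NormedRing M2 := Matrix.linftyOpNormedRing
  letI : NormedAlgebra ℝ M2 := Matrix.linftyOpNormedAlgebra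
  have hs : Summable (fun n : ℕ => ((n.factorial:ℝ))⁻¹ • B^n) := expSeries_summable' _
  have h1 : NormedSpace.exp B = ∑' n : ℕ, ((n.factorial:ℝ))⁻¹ • B^n := by rw [exp_eq_tsum ℝ]
  rw [h1, Summable.tsum_eq_zero_add hs, Summable.tsum_eq_zero_add ((summable_nat_add_iff 1).mpr hs)]
  have h2 : ∀ n : ℕ, ((((n+1+1).factorial:ℝ))⁻¹ • B^(n+1+1)) = 0 := by
    intro n
    have : B^(n+1+1) = B^n * (B*B) := by rw [← pow_two, ← pow_add]
    rw [this, hB, mul_zero, smul_zero]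
  simp [h2, tsum_zero]
theorem combo_mul {B : M2} {δ : ℝ} (hB2 : B*B = δ•(1:M2)) (x y x' y' : ℝ) :
    (x•(1:M2) + y•B) * (x'•(1:M2) + y'•B)
      = (x*x' + y*y'*δ)•(1:M2) + (x*y' + y*x')•B := by
  simp only [add_mul, mul_add, smul_mul_assoc, mul_smul_comm, one_mul, mul_one, hB2,
    smul_smul]
  module

theorem det_exp_fin_two (a b c d : ℝ) (h : 0 ≤ ((a-d)/2)^2 + b*c) :
    Matrix.det (NormedSpace.exp (!![a,b;c,d] : M2)) = Real.exp (a+d) := by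
  set m : ℝ := (a+d)/2 with hm
  set u : ℝ := (a-d)/2 with hu
  set δ : ℝ := u^2 + b*c with hδ
  have hδ0 : 0 ≤ δ := h
  set B : M2 := !![u, b; c, -u] with hB
  have hXsplit : (!![a,b;c,d] : M2) = m • (1:M2) + B := by
    ext i j; fin_cases i <;> fin_cases j <;>
      simp [hB, hm, hu, Matrix.one_apply] <;> ring
  have hB2 : B * B = δ • (1:M2) := by
    ext i j; fin_cases i <;> fin_cases j <;>
      simp [hB, hδ, Matrix.mul_apply, Fin.sum_univ_two, Matrix.one_apply] <;> ring
  have hdetB : ∀ x y : ℝ, Matrix.det (x • (1:M2) + y • B) = x^2 - y^2 * δ := by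
    intro x y
    rw [Matrix.det_fin_two]
    simp [hB, Matrix.one_apply, hδ]
    ring
  rw [hXsplit, exp_split, Matrix.det_smul]
  have hcard : Fintype.card (Fin 2) = 2 := by simp
  rw [hcard]
  have hdet1 : Matrix.det (NormedSpace.exp B) = 1 := by
    rcases eq_or_lt_of_le hδ0 with hz | hδpos
    · have hz' : δ = 0 := hz.symm
      have hBB0 : B * B = 0 := by rw [hB2, hz', zero_smul]
      rw [exp_sq_zero hBB0]
      have h1 : (1:M2) + B = (1:ℝ) • (1:M2) + (1:ℝ) • B := by simp
      rw [h1, hdetB, hz']; ring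
    · set q : ℝ := Real.sqrt δ with hq
      have hq0 : 0 < q := Real.sqrt_pos.mpr hδpos
      have hq2 : q^2 = δ := Real.sq_sqrt hδpos.le
      set P : M2 := (1/2 : ℝ) • (1:M2) + (2*q)⁻¹ • B with hP
      have hPP : P * P = P := by
        rw [hP, combo_mul hB2]
        have e1 : (1/2 * (1/2) + (2*q)⁻¹ * (2*q)⁻¹ * δ : ℝ) = 1/2 := by
          rw [← hq2]; field_simp; ring
        have e2 : (1/2 * (2*q)⁻¹ + (2*q)⁻¹ * (1/2) : ℝ) = (2*q)⁻¹ := by ring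
        rw [e1, e2]
      have hsplitB : B = (-q) • (1:M2) + (2*q) • P := by
        rw [hP, smul_add, smul_smul, smul_smul]
        have e3 : 2*q*(1/2) = q := by ring
        have e4 : 2*q*(2*q)⁻¹ = 1 := by field_simp
        rw [e3, e4, one_smul]
        module
      rw [hsplitB, exp_split, exp_idem hPP, Matrix.det_smul, hcard]
      have expand : (1:M2) + (Real.exp (2*q) - 1) • P =
          (1 + (Real.exp (2*q) - 1)*(1/2)) • (1:M2)
            + ((Real.exp (2*q) - 1) * (2*q)⁻¹) • B := by
        rw [hP, smul_add, smul_smul, smul_smul]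
        module
      rw [expand, hdetB]
      have e5 : ((Real.exp (2*q) - 1) * (2*q)⁻¹)^2 * δ = (Real.exp (2*q) - 1)^2 / 4 := by
        rw [← hq2]; field_simp; ring
      rw [e5]
      have e6 : (1 + (Real.exp (2*q) - 1)*(1/2))^2 - (Real.exp (2*q) - 1)^2/4
          = Real.exp (2*q) := by ring
      rw [e6]
      have e7 : Real.exp (-q)^2 = Real.exp (-(2*q)) := by
        rw [pow_two, ← Real.exp_add]; ring_nf
      rw [e7, ← Real.exp_add]
      simp
  rw [hdet1, mul_one, pow_two, ← Real.exp_add]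
  congr 1
  rw [hm]; ring
theorem spectrum_fin_two (X : M2) {lp lm : ℝ}
    (hsum : lp + lm = X 0 0 + X 1 1) (hprod : lp * lm = X.det) :
    spectrum ℂ (X.map (Complex.ofReal)) = {(lp : ℂ), (lm : ℂ)} := by
  ext z
  rw [spectrum.mem_iff]
  have hmat : algebraMap ℂ (Matrix (Fin 2) (Fin 2) ℂ) z - X.map (Complex.ofReal)
      = !![z - (X 0 0 : ℂ), -(X 0 1 : ℂ); -(X 1 0 : ℂ), z - (X 1 1 : ℂ)] := by
    ext i j
    fin_cases i <;> fin_cases j <;>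
      simp [Matrix.algebraMap_matrix_apply, Matrix.map_apply, Matrix.one_apply]
  rw [hmat]
  rw [show ¬IsUnit (!![z - (X 0 0 : ℂ), -(X 0 1 : ℂ); -(X 1 0 : ℂ), z - (X 1 1 : ℂ)])
      ↔ (!![z - (X 0 0 : ℂ), -(X 0 1 : ℂ); -(X 1 0 : ℂ), z - (X 1 1 : ℂ)]).det = 0 from ?_]
  · rw [Matrix.det_fin_two_of]
    have hdet : X.det = X 0 0 * X 1 1 - X 0 1 * X 1 0 := Matrix.det_fin_two X
    have key : (z - (X 0 0 : ℂ)) * (z - (X 1 1 : ℂ)) - -(X 0 1 : ℂ) * -(X 1 0 : ℂ)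
        = (z - (lp : ℂ)) * (z - (lm : ℂ)) := by
      have h1 : ((lp : ℂ)) + ((lm : ℂ)) = (X 0 0 : ℂ) + (X 1 1 : ℂ) := by
        exact_mod_cast congrArg Complex.ofReal hsum
      have h2 : ((lp : ℂ)) * ((lm : ℂ)) = (X 0 0 : ℂ) * (X 1 1 : ℂ) - (X 0 1 : ℂ) * (X 1 0 : ℂ) := by
        have := congrArg Complex.ofReal (hprod.trans hdet)
        push_cast at this
        exact_mod_cast this
      ring_nf
      linear_combination z * h1 - h2
    rw [key, mul_eq_zero, sub_eq_zero, sub_eq_zero]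
    simp [Set.mem_insert_iff]
  · rw [Matrix.isUnit_iff_isUnit_det, isUnit_iff_ne_zero, not_not]

theorem specRad_formula (X : M2) (hnn : ∀ i j, 0 ≤ X i j)
    (ht : 0 < X 0 0 + X 1 1) (hd : 0 < X.det) :
    spectralRadius ℂ (X.map (Complex.ofReal))
      = ENNReal.ofReal ((X 0 0 + X 1 1 + Real.sqrt ((X 0 0 + X 1 1)^2 - 4 * X.det))/2) := by
  set t : ℝ := X 0 0 + X 1 1 with htdef
  set D : ℝ := t^2 - 4 * X.det with hDdef
  have hD : 0 ≤ D := by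
    have hdet : X.det = X 0 0 * X 1 1 - X 0 1 * X 1 0 := Matrix.det_fin_two X
    have := hnn 0 1; have := hnn 1 0
    nlinarith [sq_nonneg (X 0 0 - X 1 1)]
  set s : ℝ := Real.sqrt D with hsdef
  have hs0 : 0 ≤ s := Real.sqrt_nonneg _
  have hs2 : s^2 = D := Real.sq_sqrt hD
  have hst : s < t := by nlinarith
  have hlm : 0 < (t - s)/2 := by linarith
  have hlp : 0 < (t + s)/2 := by linarith
  have hspec := spectrum_fin_two X (lp := (t+s)/2) (lm := (t-s)/2) (by rw [htdef]; ring)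
    (by rw [hsdef] at hs2 ⊢; nlinarith)
  rw [spectralRadius, hspec, iSup_insert, iSup_singleton]
  have h1 : ∀ r : ℝ, 0 ≤ r → (‖((r:ℝ):ℂ)‖₊ : ENNReal) = ENNReal.ofReal r := by
    intro r hr
    rw [Complex.nnnorm_real]; exact Real.enorm_eq_ofReal hr
  rw [h1 _ hlp.le, h1 _ hlm.le]
  rw [sup_eq_left.mpr (ENNReal.ofReal_le_ofReal (by linarith))]
theorem Amat_split (β γ k T₀ N s x : ℝ) :
    s • Amat β γ k T₀ N x
      = (-(s*(β+γ))) • (1:M2) + s • !![γ, k*(1-x)*T₀; N*β, β] := by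
  ext i j
  fin_cases i <;> fin_cases j <;>
    simp [Amat, Matrix.one_apply] <;> ring

theorem mexp_Amat (β γ k T₀ N s x : ℝ) :
    mexp (s • Amat β γ k T₀ N x)
      = Real.exp (-(s*(β+γ))) • NormedSpace.exp (s • (!![γ, k*(1-x)*T₀; N*β, β] : M2)) := by
  rw [mexp, Amat_split, exp_split]

theorem smul_Amat_eq (β γ k T₀ N s x : ℝ) :
    s • Amat β γ k T₀ N x
      = !![-(s*β), s*(k*(1-x)*T₀); s*(N*β), -(s*γ)] := by
  ext i j
  fin_cases i <;> fin_cases j <;> simp [Amat] <;> ring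

theorem det_mexp_Amat (β γ k T₀ N s x : ℝ) (hx : 0 ≤ k*(1-x)*T₀) (hNβ : 0 ≤ N*β) :
    (mexp (s • Amat β γ k T₀ N x)).det = Real.exp (-(s*(β+γ))) := by
  rw [mexp, smul_Amat_eq, det_exp_fin_two]
  · congr 1; ring
  · have h1 : 0 ≤ s^2 * ((k*(1-x)*T₀)*(N*β)) := mul_nonneg (sq_nonneg s) (mul_nonneg hx hNβ)
    nlinarith [sq_nonneg ((-(s*β) - -(s*γ))/2)]

set_option maxHeartbeats 1000000 in
/-- Monotonicity of the spectral radius of `Φ(e,p)` in the efficiency `e`. -/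
theorem specRad_Phi_anti_in_e (β γ k T₀ N τ : ℝ) (hβ : 0 < β) (hγ : 0 < γ) (hk : 0 < k)
    (hT₀ : 0 < T₀) (hN : 0 < N) (hτ : 0 < τ)
    (e e' p : ℝ) (he0 : 0 ≤ e) (hee' : e < e') (he'1 : e' ≤ 1) (hp0 : 0 < p) (hpτ : p ≤ τ) :
    specRad (Phi β γ k T₀ N τ e' p) < specRad (Phi β γ k T₀ N τ e p) := by
  have he1 : e ≤ 1 := le_trans hee'.le he'1
  have hc : 0 ≤ k*(1-e)*T₀ :=
    mul_nonneg (mul_nonneg hk.le (by linarith)) hT₀.le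
  have hc' : 0 ≤ k*(1-e')*T₀ :=
    mul_nonneg (mul_nonneg hk.le (by linarith)) hT₀.le
  have hc0 : 0 ≤ k*(1-(0:ℝ))*T₀ :=
    mul_nonneg (mul_nonneg hk.le (by linarith)) hT₀.le
  have hkT : 0 ≤ k*T₀ := mul_nonneg hk.le hT₀.le
  have hNβ : 0 ≤ N*β := by positivity
  have hcc' : k*(1-e')*T₀ ≤ k*(1-e)*T₀ := by nlinarith
  -- shifted nonneg matrices
  set Q0 : M2 := (τ-p) • !![γ, k*(1-(0:ℝ))*T₀; N*β, β] with hQ0def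
  set Q : M2 := p • !![γ, k*(1-e)*T₀; N*β, β] with hQdef
  set Q' : M2 := p • !![γ, k*(1-e')*T₀; N*β, β] with hQ'def
  have hτp : 0 ≤ τ - p := by linarith
  have hQ0nn : ∀ i j, 0 ≤ Q0 i j := by
    intro i j; fin_cases i <;> fin_cases j <;> simp [hQ0def, Matrix.smul_apply] <;>
      nlinarith [hτp, hγ.le, hβ.le, hNβ, hkT, hc0]
  have hQnn : ∀ i j, 0 ≤ Q i j := by
    intro i j; fin_cases i <;> fin_cases j <;> simp [hQdef, Matrix.smul_apply] <;>
      nlinarith [hp0.le, hγ.le, hβ.le, hNβ, hkT, hc]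
  have hQ'nn : ∀ i j, 0 ≤ Q' i j := by
    intro i j; fin_cases i <;> fin_cases j <;> simp [hQ'def, Matrix.smul_apply] <;>
      nlinarith [hp0.le, hγ.le, hβ.le, hNβ, hkT, hc']
  have hQ'Q : ∀ i j, Q' i j ≤ Q i j := by
    intro i j; fin_cases i <;> fin_cases j <;> simp [hQdef, hQ'def, Matrix.smul_apply] <;>
      nlinarith [hp0.le, hcc']
  -- strictness at entry (1,1) of squares
  have hsq : (Q'^2) 1 1 < (Q^2) 1 1 := by
    rw [pow_two, pow_two, Matrix.mul_apply, Matrix.mul_apply, Fin.sum_univ_two,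
      Fin.sum_univ_two]
    have h10 : Q 1 0 = p*(N*β) := by simp [hQdef, Matrix.smul_apply]
    have h10' : Q' 1 0 = p*(N*β) := by simp [hQ'def, Matrix.smul_apply]
    have h01 : Q 0 1 = p*(k*(1-e)*T₀) := by simp [hQdef, Matrix.smul_apply]
    have h01' : Q' 0 1 = p*(k*(1-e')*T₀) := by simp [hQ'def, Matrix.smul_apply]
    have h11 : Q 1 1 = p*β := by simp [hQdef, Matrix.smul_apply]
    have h11' : Q' 1 1 = p*β := by simp [hQ'def, Matrix.smul_apply]
    rw [h10, h10', h01, h01', h11, h11']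
    have hstrict : k*(1-e')*T₀ < k*(1-e)*T₀ := by
      nlinarith [mul_pos (mul_pos hk hT₀) (sub_pos.mpr hee')]
    have hpnb : p*(N*β) > 0 := by positivity
    have h2 : p*(k*(1-e')*T₀) < p*(k*(1-e)*T₀) := by nlinarith
    nlinarith [mul_lt_mul_of_pos_left h2 hpnb]
  -- scalar factors
  set w0 : ℝ := Real.exp (-((τ-p)*(β+γ))) with hw0
  set w1 : ℝ := Real.exp (-(p*(β+γ))) with hw1
  have hw0p : 0 < w0 := Real.exp_pos _
  have hw1p : 0 < w1 := Real.exp_pos _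
  -- the three exponential factors
  set E : M2 := mexp ((τ-p) • Amat β γ k T₀ N 0) with hE
  set M : M2 := mexp (p • Amat β γ k T₀ N e) with hM
  set M' : M2 := mexp (p • Amat β γ k T₀ N e') with hM'
  have hEeq : E = w0 • NormedSpace.exp Q0 := by rw [hE, mexp_Amat]
  have hMeq : M = w1 • NormedSpace.exp Q := by rw [hM, mexp_Amat]
  have hM'eq : M' = w1 • NormedSpace.exp Q' := by rw [hM', mexp_Amat]
  have hEnn : ∀ i j, 0 ≤ E i j := by
    intro i j; rw [hEeq, Matrix.smul_apply]
    exact mul_nonneg hw0p.le (exp_entry_nonneg hQ0nn i j)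
  have hEdiag : ∀ i, 0 < E i i := by
    intro i; rw [hEeq, Matrix.smul_apply]
    exact mul_pos hw0p (lt_of_lt_of_le one_pos (exp_entry_diag hQ0nn i))
  have hMnn : ∀ i j, 0 ≤ M i j := by
    intro i j; rw [hMeq, Matrix.smul_apply]
    exact mul_nonneg hw1p.le (exp_entry_nonneg hQnn i j)
  have hM'nn : ∀ i j, 0 ≤ M' i j := by
    intro i j; rw [hM'eq, Matrix.smul_apply]
    exact mul_nonneg hw1p.le (exp_entry_nonneg hQ'nn i j)
  have hM'diag : ∀ i, 0 < M' i i := by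
    intro i; rw [hM'eq, Matrix.smul_apply]
    exact mul_pos hw1p (lt_of_lt_of_le one_pos (exp_entry_diag hQ'nn i))
  have hM'M : ∀ i j, M' i j ≤ M i j := by
    intro i j; rw [hMeq, hM'eq, Matrix.smul_apply, Matrix.smul_apply]
    exact mul_le_mul_of_nonneg_left (exp_entry_mono hQ'nn hQ'Q i j) hw1p.le
  have hM11 : M' 1 1 < M 1 1 := by
    rw [hMeq, hM'eq, Matrix.smul_apply, Matrix.smul_apply]
    exact mul_lt_mul_of_pos_left (exp_entry_strict_mono hQ'nn hQ'Q hsq) hw1p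
  -- Phi matrices
  have hPhi : Phi β γ k T₀ N τ e p = E * M := rfl
  have hPhi' : Phi β γ k T₀ N τ e' p = E * M' := rfl
  have hent : ∀ i j, (E * M) i j = E i 0 * M 0 j + E i 1 * M 1 j := by
    intro i j; rw [Matrix.mul_apply, Fin.sum_univ_two]
  have hent' : ∀ i j, (E * M') i j = E i 0 * M' 0 j + E i 1 * M' 1 j := by
    intro i j; rw [Matrix.mul_apply, Fin.sum_univ_two]
  have hΦnn : ∀ i j, 0 ≤ (E * M) i j := by
    intro i j; rw [hent]
    have := hEnn i 0; have := hEnn i 1; have := hMnn 0 j; have := hMnn 1 j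
    positivity
  have hΦ'nn : ∀ i j, 0 ≤ (E * M') i j := by
    intro i j; rw [hent']
    have := hEnn i 0; have := hEnn i 1; have := hM'nn 0 j; have := hM'nn 1 j
    positivity
  -- traces
  have htr' : 0 < (E * M') 0 0 + (E * M') 1 1 := by
    rw [hent', hent']
    have h1 : 0 < E 0 0 * M' 0 0 := mul_pos (hEdiag 0) (hM'diag 0)
    have h2 : 0 < E 1 1 * M' 1 1 := mul_pos (hEdiag 1) (hM'diag 1)
    have h3 : 0 ≤ E 0 1 * M' 1 0 := mul_nonneg (hEnn 0 1) (hM'nn 1 0)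
    have h4 : 0 ≤ E 1 0 * M' 0 1 := mul_nonneg (hEnn 1 0) (hM'nn 0 1)
    linarith
  have htrlt : (E * M') 0 0 + (E * M') 1 1 < (E * M) 0 0 + (E * M) 1 1 := by
    rw [hent', hent', hent, hent]
    have h1 : E 0 0 * M' 0 0 ≤ E 0 0 * M 0 0 :=
      mul_le_mul_of_nonneg_left (hM'M 0 0) (hEnn 0 0)
    have h2 : E 0 1 * M' 1 0 ≤ E 0 1 * M 1 0 :=
      mul_le_mul_of_nonneg_left (hM'M 1 0) (hEnn 0 1)
    have h3 : E 1 0 * M' 0 1 ≤ E 1 0 * M 0 1 :=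
      mul_le_mul_of_nonneg_left (hM'M 0 1) (hEnn 1 0)
    have h4 : E 1 1 * M' 1 1 < E 1 1 * M 1 1 :=
      mul_lt_mul_of_pos_left hM11 (hEdiag 1)
    linarith
  -- determinants
  have hdetE : E.det = w0 := det_mexp_Amat β γ k T₀ N (τ-p) 0 hc0 hNβ
  have hdetM : M.det = w1 := det_mexp_Amat β γ k T₀ N p e hc hNβ
  have hdetM' : M'.det = w1 := det_mexp_Amat β γ k T₀ N p e' hc' hNβ
  have hdetΦ : (E * M).det = w0 * w1 := by rw [Matrix.det_mul, hdetE, hdetM]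
  have hdetΦ' : (E * M').det = w0 * w1 := by rw [Matrix.det_mul, hdetE, hdetM']
  have hdpos : 0 < w0 * w1 := mul_pos hw0p hw1p
  -- final comparison
  rw [show specRad (Phi β γ k T₀ N τ e' p)
      = spectralRadius ℂ ((E * M').map (Complex.ofReal)) by rw [specRad, hPhi'],
    show specRad (Phi β γ k T₀ N τ e p)
      = spectralRadius ℂ ((E * M).map (Complex.ofReal)) by rw [specRad, hPhi]]
  rw [specRad_formula _ hΦ'nn htr' (by rw [hdetΦ']; exact hdpos),
    specRad_formula _ hΦnn (lt_trans htr' htrlt) (by rw [hdetΦ]; exact hdpos)]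
  rw [hdetΦ, hdetΦ']
  set t' : ℝ := (E * M') 0 0 + (E * M') 1 1 with ht'def
  set t : ℝ := (E * M) 0 0 + (E * M) 1 1 with htdef
  have ht'pos : 0 < t' := htr'
  have htpos : 0 < t := lt_trans htr' htrlt
  have htlt : t' < t := htrlt
  have hsqrt : Real.sqrt (t'^2 - 4*(w0*w1)) ≤ Real.sqrt (t^2 - 4*(w0*w1)) := by
    apply Real.sqrt_le_sqrt; nlinarith
  have hsnn : 0 ≤ Real.sqrt (t^2 - 4*(w0*w1)) := Real.sqrt_nonneg _
  rw [ENNReal.ofReal_lt_ofReal_iff (by linarith)]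
  linarith
end

section
/- Define Φ(e,p) = e^{(τ-p)A(0)} e^{pA(e)} with A(e) = [[-β, k(1-e)T₀],[Nβ, -γ]]. For e ∈ (0,1] and 0 ≤ p < p' ≤ τ, the spectral radius satisfies ρ(Φ(e,p')) < ρ(Φ(e,p)). -/
open Matrix

section Helpers

open NormedSpace

attribute [local instance] Matrix.linftyOpNormedRing Matrix.linftyOpNormedAlgebra

lemma pow_entry_nonneg {B : Matrix (Fin 2) (Fin 2) ℝ} (hB : ∀ i j, 0 ≤ B i j) (n : ℕ) :
    ∀ i j, 0 ≤ (B ^ n) i j := by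
  induction n with
  | zero => intro i j; simp [Matrix.one_apply]; positivity
  | succ n ih =>
    intro i j
    rw [pow_succ, Matrix.mul_apply]
    exact Finset.sum_nonneg fun l _ => mul_nonneg (ih i l) (hB l j)

lemma mexp_entry_eq (B : Matrix (Fin 2) (Fin 2) ℝ) (i j : Fin 2) :
    mexp B i j = ∑' n : ℕ, (n.factorial⁻¹ : ℝ) * (B ^ n) i j := by
  have hs : Summable (fun n : ℕ => (n.factorial⁻¹ : ℝ) • B ^ n) := expSeries_summable' B
  rw [mexp, exp_eq_tsum ℝ]
  beta_reduce
  erw [tsum_apply hs, tsum_apply ((Pi.summable).mp hs i)]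
  rfl

lemma one_add_le_mexp_entry {B : Matrix (Fin 2) (Fin 2) ℝ} (hB : ∀ i j, 0 ≤ B i j) (i j : Fin 2) :
    (1 : Matrix (Fin 2) (Fin 2) ℝ) i j + B i j ≤ mexp B i j := by
  have hs : Summable (fun n : ℕ => (n.factorial⁻¹ : ℝ) * (B ^ n) i j) := by
    have hs' : Summable (fun n : ℕ => (n.factorial⁻¹ : ℝ) • B ^ n) := expSeries_summable' B
    exact ((Pi.summable).mp ((Pi.summable).mp hs' i) j)
  rw [mexp_entry_eq]
  have h2 : ∑ n ∈ Finset.range 2, (n.factorial⁻¹ : ℝ) * (B ^ n) i j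
      = (1 : Matrix (Fin 2) (Fin 2) ℝ) i j + B i j := by
    simp [Finset.sum_range_succ]
  rw [← h2]
  exact Summable.sum_le_tsum _ (fun n _ => mul_nonneg (by positivity) (pow_entry_nonneg hB n i j)) hs

lemma mexp_entry_nonneg {B : Matrix (Fin 2) (Fin 2) ℝ} (hB : ∀ i j, 0 ≤ B i j) (i j : Fin 2) :
    0 ≤ mexp B i j := by
  rw [mexp_entry_eq]
  exact tsum_nonneg fun n => mul_nonneg (by positivity) (pow_entry_nonneg hB n i j)

lemma mexp_scalar (c : ℝ) : mexp (c • (1 : Matrix (Fin 2) (Fin 2) ℝ)) = Real.exp c • 1 := by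
  rw [mexp, ← Algebra.algebraMap_eq_smul_one, ← Algebra.algebraMap_eq_smul_one, Real.exp_eq_exp_ℝ]
  exact (algebraMap_exp_comm (𝕂 := ℝ) c).symm

lemma mexp_quasipos (A : Matrix (Fin 2) (Fin 2) ℝ) (t : ℝ) (ht : 0 ≤ t)
    (h01 : 0 ≤ A 0 1) (h10 : 0 ≤ A 1 0) :
    (∀ i j, 0 ≤ mexp (t • A) i j) ∧ (∀ i, 0 < mexp (t • A) i i) ∧
    (∀ i j, i ≠ j →
      Real.exp (-(t * (max (max (-(A 0 0)) (-(A 1 1))) 0))) * (t * A i j) ≤ mexp (t • A) i j) := by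
  set m : ℝ := max (max (-(A 0 0)) (-(A 1 1))) 0 with hm
  set B : Matrix (Fin 2) (Fin 2) ℝ := t • (A + m • 1) with hBdef
  have hB : ∀ i j, 0 ≤ B i j := by
    intro i j
    have h00 : 0 ≤ A 0 0 + m := by
      have : -(A 0 0) ≤ m := le_max_of_le_left (le_max_left _ _); linarith
    have h11 : 0 ≤ A 1 1 + m := by
      have : -(A 1 1) ≤ m := le_max_of_le_left (le_max_right _ _); linarith
    fin_cases i <;> fin_cases j <;>
      simp [hBdef, Matrix.one_apply] <;>
      nlinarith [mul_nonneg ht h00, mul_nonneg ht h11, mul_nonneg ht h01, mul_nonneg ht h10]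
  have hsplit : t • A = (-(t * m)) • (1 : Matrix (Fin 2) (Fin 2) ℝ) + B := by
    ext i j
    simp [hBdef, Matrix.add_apply, Matrix.smul_apply, Matrix.one_apply]
    try ring
  have hcomm : Commute ((-(t * m)) • (1 : Matrix (Fin 2) (Fin 2) ℝ)) B :=
    (Commute.one_left B).smul_left _
  have key : mexp (t • A) = Real.exp (-(t * m)) • mexp B := by
    rw [hsplit, mexp, Matrix.exp_add_of_commute _ _ hcomm]
    show mexp _ * mexp _ = _
    rw [mexp_scalar, smul_mul_assoc, one_mul]
  have hexp : (0:ℝ) < Real.exp (-(t * m)) := Real.exp_pos _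
  have hentry : ∀ i j, mexp (t • A) i j = Real.exp (-(t * m)) * mexp B i j := by
    intro i j; rw [key]; rfl
  refine ⟨fun i j => ?_, fun i => ?_, fun i j hij => ?_⟩
  · rw [hentry]; exact mul_nonneg hexp.le (mexp_entry_nonneg hB i j)
  · rw [hentry]
    have h1 : (1:ℝ) ≤ mexp B i i := by
      have := one_add_le_mexp_entry hB i i
      have hBi := hB i i
      simp [Matrix.one_apply] at this
      linarith
    nlinarith
  · rw [hentry]
    have h1 : t * A i j ≤ mexp B i j := by
      have h := one_add_le_mexp_entry hB i j
      rw [Matrix.one_apply_ne hij] at h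
      have hBij : B i j = t * A i j := by
        simp [hBdef, Matrix.add_apply, Matrix.smul_apply, Matrix.one_apply_ne hij]
      linarith
    exact mul_le_mul_of_nonneg_left h1 hexp.le

lemma mexp_det_pos (A : Matrix (Fin 2) (Fin 2) ℝ) : 0 < (mexp A).det := by
  have hsplit : A = (2⁻¹ : ℝ) • A + (2⁻¹ : ℝ) • A := by
    rw [← add_smul]; norm_num
  have hmul : mexp A = mexp ((2⁻¹ : ℝ) • A) * mexp ((2⁻¹ : ℝ) • A) := by
    rw [mexp, mexp, ← Matrix.exp_add_of_commute _ _ (Commute.refl _), ← hsplit]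
  have hunit : IsUnit (mexp ((2⁻¹ : ℝ) • A)) := Matrix.isUnit_exp _
  have hne : (mexp ((2⁻¹ : ℝ) • A)).det ≠ 0 :=
    IsUnit.ne_zero ((Matrix.isUnit_iff_isUnit_det _).1 hunit)
  rw [hmul, Matrix.det_mul]
  exact mul_self_pos.2 hne

noncomputable def entryCLM (i j : Fin 2) : Matrix (Fin 2) (Fin 2) ℝ →L[ℝ] ℝ :=
  LinearMap.toContinuousLinearMap (Matrix.entryLinearMap ℝ ℝ i j)

lemma hasDerivAt_entry {f : ℝ → Matrix (Fin 2) (Fin 2) ℝ} {f' : Matrix (Fin 2) (Fin 2) ℝ} {x : ℝ}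
    (hf : HasDerivAt f f' x) (i j : Fin 2) :
    HasDerivAt (fun y => f y i j) (f' i j) x := by
  have := (entryCLM i j).hasFDerivAt.comp_hasDerivAt x hf
  exact this

lemma hasDerivAt_prod_exp (A₀ Ae : Matrix (Fin 2) (Fin 2) ℝ) (τ x : ℝ) :
    HasDerivAt (fun y : ℝ => mexp ((τ - y) • A₀) * mexp (y • Ae))
      (mexp ((τ - x) • A₀) * (Ae - A₀) * mexp (x • Ae)) x := by
  have h2 : HasDerivAt (fun y : ℝ => τ - y) (-1) x := by
    simpa using (hasDerivAt_id x).const_sub τ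
  have hF : HasDerivAt (fun y : ℝ => mexp ((τ - y) • A₀))
      (-(mexp ((τ - x) • A₀) * A₀)) x := by
    have := (hasDerivAt_exp_smul_const A₀ (τ - x)).scomp x h2
    simp only [neg_smul, one_smul] at this
    exact this
  have hG : HasDerivAt (fun y : ℝ => mexp (y • Ae)) (Ae * mexp (x • Ae)) x :=
    by unfold mexp; exact hasDerivAt_exp_smul_const' Ae x
  have := hF.mul hG
  have e : mexp ((τ - x) • A₀) * (Ae - A₀) * mexp (x • Ae)
      = -(mexp ((τ - x) • A₀) * A₀) * mexp (x • Ae) + mexp ((τ - x) • A₀) * (Ae * mexp (x • Ae)) := by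
    noncomm_ring
  rw [e]
  exact this

lemma trace_XDY (X Y : Matrix (Fin 2) (Fin 2) ℝ) (d : ℝ) :
    (X * !![0, d; 0, 0] * Y) 0 0 + (X * !![0, d; 0, 0] * Y) 1 1 = d * ((Y * X) 1 0) := by
  simp [Matrix.mul_apply, Fin.sum_univ_two]
  ring

lemma det_deriv_zero (X Y : Matrix (Fin 2) (Fin 2) ℝ) (d : ℝ) :
    (X * !![0, d; 0, 0] * Y) 0 0 * (X * Y) 1 1 + (X * Y) 0 0 * (X * !![0, d; 0, 0] * Y) 1 1
      - ((X * !![0, d; 0, 0] * Y) 0 1 * (X * Y) 1 0 + (X * Y) 0 1 * (X * !![0, d; 0, 0] * Y) 1 0)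
      = 0 := by
  simp [Matrix.mul_apply, Fin.sum_univ_two]
  ring

lemma spectrum_fin_two_s7 (M : Matrix (Fin 2) (Fin 2) ℝ) (r₁ r₂ : ℝ)
    (hsum : r₁ + r₂ = M 0 0 + M 1 1) (hprod : r₁ * r₂ = M 0 0 * M 1 1 - M 0 1 * M 1 0) :
    spectrum ℂ (M.map Complex.ofReal) = {(r₁ : ℂ), (r₂ : ℂ)} := by
  ext z
  rw [spectrum.mem_iff]
  have hdet : ((algebraMap ℂ (Matrix (Fin 2) (Fin 2) ℂ)) z - M.map Complex.ofReal).det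
      = (z - (r₁ : ℂ)) * (z - (r₂ : ℂ)) := by
    rw [Matrix.det_fin_two]
    simp [Matrix.algebraMap_matrix_apply, Matrix.map_apply, Matrix.diagonal_apply,
      Matrix.sub_apply]
    have h1 : ((M 0 0 : ℝ) : ℂ) + (M 1 1 : ℝ) = (r₁ : ℂ) + r₂ := by
      norm_cast; linarith
    have h2 : ((M 0 0 : ℝ) : ℂ) * (M 1 1 : ℝ) - (M 0 1 : ℝ) * (M 1 0 : ℝ)
        = (r₁ : ℂ) * r₂ := by norm_cast; linarith
    linear_combination (-1 : ℂ) * z * h1 + h2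
  constructor
  · intro h
    have : ((algebraMap ℂ (Matrix (Fin 2) (Fin 2) ℂ)) z - M.map Complex.ofReal).det = 0 := by
      by_contra hne
      exact h ((Matrix.isUnit_iff_isUnit_det _).2 (isUnit_iff_ne_zero.2 hne))
    rw [hdet, mul_eq_zero, sub_eq_zero, sub_eq_zero] at this
    simpa using this
  · intro hz
    intro hu
    have := (Matrix.isUnit_iff_isUnit_det _).1 hu
    rw [hdet] at this
    have hne : (z - (r₁:ℂ)) * (z - (r₂:ℂ)) ≠ 0 := this.ne_zero
    rcases hz with h | h
    · exact hne (by rw [h]; ring_nf)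
    · simp only [Set.mem_singleton_iff] at h
      exact hne (by rw [h]; ring_nf)

lemma specRad_formula_s7 (M : Matrix (Fin 2) (Fin 2) ℝ) (h01 : 0 ≤ M 0 1) (h10 : 0 ≤ M 1 0)
    (h00 : 0 < M 0 0) (h11 : 0 < M 1 1) (hdet : 0 < M 0 0 * M 1 1 - M 0 1 * M 1 0) :
    specRad M = ENNReal.ofReal
      ((M 0 0 + M 1 1 + Real.sqrt ((M 0 0 + M 1 1) ^ 2
        - 4 * (M 0 0 * M 1 1 - M 0 1 * M 1 0))) / 2) := by
  have hΔ : 0 ≤ (M 0 0 + M 1 1) ^ 2 - 4 * (M 0 0 * M 1 1 - M 0 1 * M 1 0) := by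
    nlinarith [mul_nonneg h01 h10, sq_nonneg (M 0 0 - M 1 1)]
  set t : ℝ := M 0 0 + M 1 1 with htdef
  set d : ℝ := M 0 0 * M 1 1 - M 0 1 * M 1 0 with hddef
  have ht : 0 < t := by positivity
  set s : ℝ := Real.sqrt (t ^ 2 - 4 * d) with hsdef
  have hs0 : 0 ≤ s := Real.sqrt_nonneg _
  have hs2 : s ^ 2 = t ^ 2 - 4 * d := Real.sq_sqrt hΔ
  have hst : s < t := by
    rw [hsdef, Real.sqrt_lt' ht]; nlinarith
  set r₁ : ℝ := (t - s) / 2 with hr₁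
  set r₂ : ℝ := (t + s) / 2 with hr₂
  have hr₁pos : 0 < r₁ := by rw [hr₁]; linarith
  have hr₁₂ : r₁ ≤ r₂ := by rw [hr₁, hr₂]; linarith
  have hr₂pos : 0 < r₂ := hr₁pos.trans_le hr₁₂
  have hspec := spectrum_fin_two_s7 M r₁ r₂ (by rw [hr₁, hr₂]; ring)
    (by rw [hr₁, hr₂]; rw [← hddef]; nlinarith [hs2])
  rw [specRad, spectralRadius, hspec, iSup_pair]
  rw [Complex.nnnorm_real, Complex.nnnorm_real,
    ← enorm_eq_nnnorm, ← enorm_eq_nnnorm, Real.enorm_eq_ofReal hr₁pos.le, Real.enorm_eq_ofReal hr₂pos.le]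
  exact sup_eq_right.2 (ENNReal.ofReal_le_ofReal hr₁₂)

/-- Monotonicity of the spectral radius of `Φ(e,p)` in the duration `p`. -/
theorem specRad_Phi_anti_in_p (β γ k T₀ N τ : ℝ) (hβ : 0 < β) (hγ : 0 < γ) (hk : 0 < k)
    (hT₀ : 0 < T₀) (hN : 0 < N) (hτ : 0 < τ)
    (e p p' : ℝ) (he0 : 0 < e) (he1 : e ≤ 1) (hp0 : 0 ≤ p) (hpp' : p < p') (hp'τ : p' ≤ τ) :
    specRad (Phi β γ k T₀ N τ e p') < specRad (Phi β γ k T₀ N τ e p) := by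
  have hA0_01 : Amat β γ k T₀ N 0 0 1 = k * 1 * T₀ := by simp [Amat]
  have hA0_10 : Amat β γ k T₀ N 0 1 0 = N * β := by simp [Amat]
  have hAe_01 : Amat β γ k T₀ N e 0 1 = k * (1 - e) * T₀ := by simp [Amat]
  have hAe_10 : Amat β γ k T₀ N e 1 0 = N * β := by simp [Amat]
  have hAe01nn : 0 ≤ Amat β γ k T₀ N e 0 1 := by
    rw [hAe_01]
    have h1e : 0 ≤ 1 - e := by linarith
    positivity
  have hAe10nn : 0 ≤ Amat β γ k T₀ N e 1 0 := by rw [hAe_10]; positivity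
  have hA001nn : 0 ≤ Amat β γ k T₀ N 0 0 1 := by rw [hA0_01]; positivity
  have hA010nn : 0 ≤ Amat β γ k T₀ N 0 1 0 := by rw [hA0_10]; positivity
  have hPhi : ∀ x : ℝ, Phi β γ k T₀ N τ e x
      = mexp ((τ - x) • Amat β γ k T₀ N 0) * mexp (x • Amat β γ k T₀ N e) := fun _ => rfl
  -- entrywise facts about Phi on [0, τ]
  have hfacts : ∀ x : ℝ, 0 ≤ x → x ≤ τ →
      (∀ i j, 0 ≤ Phi β γ k T₀ N τ e x i j) ∧ (∀ i, 0 < Phi β γ k T₀ N τ e x i i) := by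
    intro x hx hxτ
    obtain ⟨hE0n, hE0d, -⟩ :=
      mexp_quasipos (Amat β γ k T₀ N 0) (τ - x) (by linarith) hA001nn hA010nn
    obtain ⟨hEen, hEed, -⟩ := mexp_quasipos (Amat β γ k T₀ N e) x hx hAe01nn hAe10nn
    constructor
    · intro i j
      rw [hPhi, Matrix.mul_apply]
      exact Finset.sum_nonneg fun l _ => mul_nonneg (hE0n i l) (hEen l j)
    · intro i
      rw [hPhi, Matrix.mul_apply, Fin.sum_univ_two]
      fin_cases i
      · exact add_pos_of_pos_of_nonneg (mul_pos (hE0d 0) (hEed 0))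
          (mul_nonneg (hE0n 0 1) (hEen 1 0))
      · exact add_pos_of_nonneg_of_pos (mul_nonneg (hE0n 1 0) (hEen 0 1))
          (mul_pos (hE0d 1) (hEed 1))
  have hD : Amat β γ k T₀ N e - Amat β γ k T₀ N 0 = !![0, -(k * e * T₀); 0, 0] := by
    ext i j
    fin_cases i <;> fin_cases j <;> simp [Amat] <;> ring
  have hderiv : ∀ x : ℝ, HasDerivAt (fun y => Phi β γ k T₀ N τ e y)
      (mexp ((τ - x) • Amat β γ k T₀ N 0) * !![0, -(k * e * T₀); 0, 0]
        * mexp (x • Amat β γ k T₀ N e)) x := by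
    intro x
    have h := hasDerivAt_prod_exp (Amat β γ k T₀ N 0) (Amat β γ k T₀ N e) τ x
    rw [hD] at h
    exact h
  -- the trace function
  set F : ℝ → ℝ := fun x => Phi β γ k T₀ N τ e x 0 0 + Phi β γ k T₀ N τ e x 1 1 with hF
  have htrD : ∀ x : ℝ, HasDerivAt F
      (-(k * e * T₀) * ((mexp (x • Amat β γ k T₀ N e)
        * mexp ((τ - x) • Amat β γ k T₀ N 0)) 1 0)) x := by
    intro x
    have h := (hasDerivAt_entry (hderiv x) 0 0).add (hasDerivAt_entry (hderiv x) 1 1)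
    rw [trace_XDY] at h
    exact h
  -- the determinant function
  set G : ℝ → ℝ := fun x => Phi β γ k T₀ N τ e x 0 0 * Phi β γ k T₀ N τ e x 1 1
      - Phi β γ k T₀ N τ e x 0 1 * Phi β γ k T₀ N τ e x 1 0 with hG
  have hdetD : ∀ x : ℝ, HasDerivAt G 0 x := by
    intro x
    have h := ((hasDerivAt_entry (hderiv x) 0 0).mul (hasDerivAt_entry (hderiv x) 1 1)).sub
      ((hasDerivAt_entry (hderiv x) 0 1).mul (hasDerivAt_entry (hderiv x) 1 0))
    have hz := det_deriv_zero (mexp ((τ - x) • Amat β γ k T₀ N 0))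
      (mexp (x • Amat β γ k T₀ N e)) (-(k * e * T₀))
    simp only [hPhi] at h
    rw [hz] at h
    exact h
  have hdetconst : G p = G p' :=
    is_const_of_deriv_eq_zero (fun x => (hdetD x).differentiableAt)
      (fun x => (hdetD x).deriv) p p'
  -- trace is strictly decreasing on [p, p']
  have htrace_anti : StrictAntiOn F (Set.Icc p p') := by
    apply strictAntiOn_of_deriv_neg (convex_Icc p p')
    · exact (continuous_iff_continuousAt.2 fun x => (htrD x).continuousAt).continuousOn
    · intro x hx
      rw [interior_Icc, Set.mem_Ioo] at hx
      rw [(htrD x).deriv]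
      have hx0 : 0 < x := lt_of_le_of_lt hp0 hx.1
      have hxτ : x < τ := lt_of_lt_of_le hx.2 hp'τ
      obtain ⟨hE0n, hE0d, hE0off⟩ :=
        mexp_quasipos (Amat β γ k T₀ N 0) (τ - x) (by linarith) hA001nn hA010nn
      obtain ⟨hEen, hEed, -⟩ := mexp_quasipos (Amat β γ k T₀ N e) x hx0.le hAe01nn hAe10nn
      have hE010 : 0 < mexp ((τ - x) • Amat β γ k T₀ N 0) 1 0 := by
        refine lt_of_lt_of_le ?_ (hE0off 1 0 (by decide))
        rw [hA0_10]
        exact mul_pos (Real.exp_pos _) (mul_pos (by linarith) (by positivity))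
      have hentry : 0 < (mexp (x • Amat β γ k T₀ N e)
          * mexp ((τ - x) • Amat β γ k T₀ N 0)) 1 0 := by
        rw [Matrix.mul_apply, Fin.sum_univ_two]
        exact add_pos_of_nonneg_of_pos (mul_nonneg (hEen 1 0) (hE0n 0 0))
          (mul_pos (hEed 1) hE010)
      have hket : 0 < k * e * T₀ := by positivity
      exact mul_neg_of_neg_of_pos (by linarith) hentry
  have hppτ : p ≤ τ := le_trans hpp'.le hp'τ
  have hp'0 : 0 ≤ p' := le_trans hp0 hpp'.le
  obtain ⟨hPn, hPd⟩ := hfacts p hp0 hppτ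
  obtain ⟨hP'n, hP'd⟩ := hfacts p' hp'0 hp'τ
  -- determinants are positive
  have hdetpos : ∀ x : ℝ, 0 < G x := by
    intro x
    have : G x = (Phi β γ k T₀ N τ e x).det := (Matrix.det_fin_two _).symm
    rw [this, hPhi, Matrix.det_mul]
    exact mul_pos (mexp_det_pos _) (mexp_det_pos _)
  -- the strict trace inequality
  have htr : F p' < F p := htrace_anti (Set.mem_Icc.2 ⟨le_refl p, hpp'.le⟩)
    (Set.mem_Icc.2 ⟨hpp'.le, le_refl p'⟩) hpp'
  have htrp'pos : 0 < F p' := add_pos (hP'd 0) (hP'd 1)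
  -- apply the spectral radius formula
  rw [specRad_formula_s7 _ (hPn 0 1) (hPn 1 0) (hPd 0) (hPd 1) (hdetpos p),
    specRad_formula_s7 _ (hP'n 0 1) (hP'n 1 0) (hP'd 0) (hP'd 1) (hdetpos p')]
  have hd : Phi β γ k T₀ N τ e p' 0 0 * Phi β γ k T₀ N τ e p' 1 1
      - Phi β γ k T₀ N τ e p' 0 1 * Phi β γ k T₀ N τ e p' 1 0
      = Phi β γ k T₀ N τ e p 0 0 * Phi β γ k T₀ N τ e p 1 1
      - Phi β γ k T₀ N τ e p 0 1 * Phi β γ k T₀ N τ e p 1 0 := hdetconst.symm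
  set t : ℝ := Phi β γ k T₀ N τ e p 0 0 + Phi β γ k T₀ N τ e p 1 1 with htdef
  set t' : ℝ := Phi β γ k T₀ N τ e p' 0 0 + Phi β γ k T₀ N τ e p' 1 1 with ht'def
  set d : ℝ := Phi β γ k T₀ N τ e p 0 0 * Phi β γ k T₀ N τ e p 1 1
      - Phi β γ k T₀ N τ e p 0 1 * Phi β γ k T₀ N τ e p 1 0 with hddef
  rw [hd]
  have ht't : t' < t := htr
  have ht'pos : 0 < t' := htrp'pos
  have hsle : Real.sqrt (t' ^ 2 - 4 * d) ≤ Real.sqrt (t ^ 2 - 4 * d) := by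
    apply Real.sqrt_le_sqrt; nlinarith
  apply (ENNReal.ofReal_lt_ofReal_iff ?_).2
  · linarith
  · have := Real.sqrt_nonneg (t ^ 2 - 4 * d)
    linarith

end Helpers
end

section
/- Let 0 = p₀ < p₁ < ⋯ < p_m < p_{m+1} = τ and efficiencies 1 ≥ e₁ > e₂ > ⋯ > e_{m+1} ≥ 0. Define Φ(E,P) = e^{(p_{m+1}-p_m)A(e_{m+1})} ⋯ e^{(p₁-p₀)A(e₁)} with A(e) = [[-β, k(1-e)T₀],[Nβ, -γ]]. If for some index i ∈ {1,…,m+1} the value e_i is replaced by e_i' with e_{i+1} < e_i < e_i' < e_{i-1} (conventions e₀ = 1, e_{m+2} = 0, with non-strict inequality allowed at the endpoints), then the spectral radius strictly decreases: ρ(Φ(Ẽ_i, P)) < ρ(Φ(E,P)). -/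
open Matrix

/-- The monodromy matrix for a general piecewise-constant periodic efficiency:
`Φ(E,P) = e^{(p_{m+1}-p_m)A(e_{m+1})} ⋯ e^{(p₁-p₀)A(e₁)}`, where the efficiency takes the
value `e i` on the interval `[p i.castSucc, p i.succ)`. -/
noncomputable def PhiPC (β γ k T₀ N : ℝ) (m : ℕ) (e : Fin (m + 1) → ℝ)
    (p : Fin (m + 2) → ℝ) : Matrix (Fin 2) (Fin 2) ℝ :=
  (((List.finRange (m + 1)).map fun i =>
      mexp ((p i.succ - p i.castSucc) • Amat β γ k T₀ N (e i))).reverse).prod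

namespace SpecAux

abbrev Mat := Matrix (Fin 2) (Fin 2) ℝ

def Nn (M : Mat) : Prop := ∀ i j, 0 ≤ M i j
def Le2 (A B : Mat) : Prop := ∀ i j, A i j ≤ B i j
def GoodD (M : Mat) : Prop := Nn M ∧ 0 < M 0 0 ∧ 0 < M 1 1
def Good (M : Mat) : Prop := GoodD M ∧ 0 < M 1 0

lemma mexp_hasSum (A : Mat) (i j : Fin 2) :
    HasSum (fun n : ℕ => ((n.factorial : ℝ))⁻¹ * (A ^ n) i j) (mexp A i j) := by
  letI : SeminormedRing (Matrix (Fin 2) (Fin 2) ℝ) := Matrix.linftyOpSemiNormedRing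
  letI : NormedRing (Matrix (Fin 2) (Fin 2) ℝ) := Matrix.linftyOpNormedRing
  letI : NormedAlgebra ℝ (Matrix (Fin 2) (Fin 2) ℝ) := Matrix.linftyOpNormedAlgebra
  have h : HasSum (fun n : ℕ => ((n.factorial : ℝ))⁻¹ • A ^ n) (NormedSpace.exp A) := by
    rw [NormedSpace.exp_eq_tsum ℝ]
    exact (NormedSpace.expSeries_summable' (𝕂 := ℝ) A).hasSum
  have h2 := h.map (LinearMap.proj j ∘ₗ LinearMap.proj (φ := fun _ : Fin 2 => Fin 2 → ℝ) i :
      Matrix (Fin 2) (Fin 2) ℝ →ₗ[ℝ] ℝ) (by exact (continuous_apply j).comp (continuous_apply i))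
  exact h2

lemma pow_nn {A : Mat} (hA : Nn A) (n : ℕ) : Nn (A ^ n) := by
  induction n with
  | zero => intro i j; simp [Matrix.one_apply]; positivity
  | succ n ih =>
    intro i j
    rw [pow_succ, Matrix.mul_apply]
    exact Finset.sum_nonneg fun x _ => mul_nonneg (ih i x) (hA x j)

lemma pow_mono {A B : Mat} (hA : Nn A) (hAB : Le2 A B) (n : ℕ) : Le2 (A ^ n) (B ^ n) := by
  induction n with
  | zero => intro i j; simp
  | succ n ih =>
    intro i j
    rw [pow_succ, pow_succ, Matrix.mul_apply, Matrix.mul_apply]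
    refine Finset.sum_le_sum fun x _ => mul_le_mul (ih i x) (hAB x j) (hA x j) ?_
    exact le_trans (pow_nn hA n i x) (ih i x)

lemma term_nn {A : Mat} (hA : Nn A) (i j : Fin 2) (n : ℕ) :
    0 ≤ ((n.factorial : ℝ))⁻¹ * (A ^ n) i j :=
  mul_nonneg (by positivity) (pow_nn hA n i j)

lemma mexp_nn {A : Mat} (hA : Nn A) : Nn (mexp A) := fun i j =>
  hasSum_le (fun n => term_nn hA i j n) hasSum_zero (mexp_hasSum A i j)

lemma mexp_le {A B : Mat} (hA : Nn A) (hAB : Le2 A B) : Le2 (mexp A) (mexp B) := fun i j =>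
  hasSum_le (fun n => mul_le_mul_of_nonneg_left (pow_mono hA hAB n i j) (by positivity))
    (mexp_hasSum A i j) (mexp_hasSum B i j)

lemma mexp_lt_01 {A B : Mat} (hA : Nn A) (hAB : Le2 A B) (h01 : A 0 1 < B 0 1) :
    mexp A 0 1 < mexp B 0 1 := by
  refine hasSum_lt (i := 1)
    (fun n => mul_le_mul_of_nonneg_left (pow_mono hA hAB n 0 1) (by positivity))
    ?_ (mexp_hasSum A 0 1) (mexp_hasSum B 0 1)
  simpa [Nat.factorial] using h01

lemma mexp_ge_one_add {A : Mat} (hA : Nn A) (i j : Fin 2) :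
    (1 : Mat) i j + A i j ≤ mexp A i j := by
  have h := sum_le_hasSum ({0, 1} : Finset ℕ)
    (fun n _ => term_nn hA i j n) (mexp_hasSum A i j)
  simpa [Nat.factorial] using h

lemma mexp_add_smul_one (A : Mat) (c : ℝ) : mexp (A + c • 1) = Real.exp c • mexp A := by
  letI : SeminormedRing (Matrix (Fin 2) (Fin 2) ℝ) := Matrix.linftyOpSemiNormedRing
  letI : NormedRing (Matrix (Fin 2) (Fin 2) ℝ) := Matrix.linftyOpNormedRing
  letI : NormedAlgebra ℝ (Matrix (Fin 2) (Fin 2) ℝ) := Matrix.linftyOpNormedAlgebra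
  have hc : Commute A (c • (1 : Mat)) := (Commute.one_right A).smul_right c
  have h1 : mexp (A + c • 1) = mexp A * mexp (c • 1) := by
    rw [mexp, mexp, mexp]
    exact Matrix.exp_add_of_commute _ _ hc
  have h2 : mexp (c • (1 : Mat)) = Real.exp c • 1 := by
    rw [mexp, ← Algebra.algebraMap_eq_smul_one]
    have := NormedSpace.algebraMap_exp_comm (𝔸 := Mat) c
    rw [← Real.exp_eq_exp_ℝ, Algebra.algebraMap_eq_smul_one] at this
    exact this.symm
  rw [h1, h2, mul_smul_comm, mul_one]


noncomputable def Bm (β γ k T₀ N Δ e : ℝ) : Mat := Δ • Amat β γ k T₀ N e + (Δ * max β γ) • 1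

lemma mexp_factor (β γ k T₀ N Δ e : ℝ) :
    mexp (Δ • Amat β γ k T₀ N e) = Real.exp (-(Δ * max β γ)) • mexp (Bm β γ k T₀ N Δ e) := by
  have h : Δ • Amat β γ k T₀ N e = Bm β γ k T₀ N Δ e + (-(Δ * max β γ)) • 1 := by
    rw [Bm, neg_smul]; abel
  rw [h, mexp_add_smul_one]

lemma Bm_entries (β γ k T₀ N Δ e : ℝ) :
    Bm β γ k T₀ N Δ e 0 0 = Δ * (-β) + Δ * max β γ ∧
    Bm β γ k T₀ N Δ e 0 1 = Δ * (k * (1 - e) * T₀) ∧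
    Bm β γ k T₀ N Δ e 1 0 = Δ * (N * β) ∧
    Bm β γ k T₀ N Δ e 1 1 = Δ * (-γ) + Δ * max β γ := by
  refine ⟨?_, ?_, ?_, ?_⟩ <;> simp [Bm, Amat, Matrix.one_apply]

lemma Bm_nn {β γ k T₀ N Δ e : ℝ} (hβ : 0 < β) (hγ : 0 < γ) (hk : 0 < k) (hT₀ : 0 < T₀)
    (hN : 0 < N) (hΔ : 0 ≤ Δ) (he : e ≤ 1) : Nn (Bm β γ k T₀ N Δ e) := by
  intro i j
  fin_cases i <;> fin_cases j <;> simp [Bm, Amat, Matrix.one_apply] <;>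
    nlinarith [le_max_left β γ, le_max_right β γ,
      mul_nonneg hΔ (mul_nonneg (mul_nonneg hk.le (sub_nonneg.mpr he)) hT₀.le),
      mul_nonneg hΔ (mul_nonneg hN.le hβ.le)]

lemma factor_good {β γ k T₀ N Δ e : ℝ} (hβ : 0 < β) (hγ : 0 < γ) (hk : 0 < k) (hT₀ : 0 < T₀)
    (hN : 0 < N) (hΔ : 0 < Δ) (he : e ≤ 1) : Good (mexp (Δ • Amat β γ k T₀ N e)) := by
  rw [mexp_factor]
  have hcpos : 0 < Real.exp (-(Δ * max β γ)) := Real.exp_pos _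
  have hnn := Bm_nn hβ hγ hk hT₀ hN hΔ.le he
  obtain ⟨h00, h01, h10, h11⟩ := Bm_entries β γ k T₀ N Δ e
  have hmnn := mexp_nn hnn
  have e00 := mexp_ge_one_add hnn 0 0
  have e11 := mexp_ge_one_add hnn 1 1
  have e10 := mexp_ge_one_add hnn 1 0
  rw [Matrix.one_apply_eq, h00] at e00
  rw [Matrix.one_apply_eq, h11] at e11
  rw [Matrix.one_apply_ne (by norm_num), h10] at e10
  have hb00 := hnn 0 0
  have hb11 := hnn 1 1
  refine ⟨⟨fun i j => ?_, ?_, ?_⟩, ?_⟩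
  · simp only [Matrix.smul_apply, smul_eq_mul]
    exact mul_nonneg hcpos.le (hmnn i j)
  · simp only [Matrix.smul_apply, smul_eq_mul]
    nlinarith
  · simp only [Matrix.smul_apply, smul_eq_mul]
    nlinarith
  · simp only [Matrix.smul_apply, smul_eq_mul]
    nlinarith [mul_pos (mul_pos hN hβ) hΔ]

lemma factor_le {β γ k T₀ N Δ eL eH : ℝ} (hβ : 0 < β) (hγ : 0 < γ) (hk : 0 < k) (hT₀ : 0 < T₀)
    (hN : 0 < N) (hΔ : 0 < Δ) (hH : eH ≤ 1) (hLH : eL < eH) :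
    Le2 (mexp (Δ • Amat β γ k T₀ N eH)) (mexp (Δ • Amat β γ k T₀ N eL)) ∧
      mexp (Δ • Amat β γ k T₀ N eH) 0 1 < mexp (Δ • Amat β γ k T₀ N eL) 0 1 := by
  have hL : eL ≤ 1 := le_trans hLH.le hH
  rw [mexp_factor β γ k T₀ N Δ eH, mexp_factor β γ k T₀ N Δ eL]
  have hcpos : 0 < Real.exp (-(Δ * max β γ)) := Real.exp_pos _
  have hnnH := Bm_nn hβ hγ hk hT₀ hN hΔ.le hH
  obtain ⟨hH00, hH01, hH10, hH11⟩ := Bm_entries β γ k T₀ N Δ eH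
  obtain ⟨hL00, hL01, hL10, hL11⟩ := Bm_entries β γ k T₀ N Δ eL
  have hle : Le2 (Bm β γ k T₀ N Δ eH) (Bm β γ k T₀ N Δ eL) := by
    intro i j
    fin_cases i <;> fin_cases j
    · exact le_of_eq (hH00.trans hL00.symm)
    · show Bm β γ k T₀ N Δ eH 0 1 ≤ Bm β γ k T₀ N Δ eL 0 1
      rw [hH01, hL01]
      nlinarith [mul_lt_mul_of_pos_left hLH (mul_pos (mul_pos hΔ hk) hT₀)]
    · exact le_of_eq (hH10.trans hL10.symm)
    · exact le_of_eq (hH11.trans hL11.symm)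
  have hstrict : Bm β γ k T₀ N Δ eH 0 1 < Bm β γ k T₀ N Δ eL 0 1 := by
    rw [hH01, hL01]
    nlinarith [mul_lt_mul_of_pos_left hLH (mul_pos (mul_pos hΔ hk) hT₀)]
  constructor
  · intro i j
    simp only [Matrix.smul_apply, smul_eq_mul]
    exact mul_le_mul_of_nonneg_left (mexp_le hnnH hle i j) hcpos.le
  · simp only [Matrix.smul_apply, smul_eq_mul]
    exact mul_lt_mul_of_pos_left (mexp_lt_01 hnnH hle hstrict) hcpos
lemma mul_apply2 (A B : Mat) (i j : Fin 2) :
    (A * B) i j = A i 0 * B 0 j + A i 1 * B 1 j := by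
  rw [Matrix.mul_apply, Fin.sum_univ_two]

lemma Nn.mul {A B : Mat} (hA : Nn A) (hB : Nn B) : Nn (A * B) := by
  intro i j; rw [mul_apply2]
  have := hA i 0; have := hA i 1; have := hB 0 j; have := hB 1 j; positivity

lemma GoodD.mul {A B : Mat} (hA : GoodD A) (hB : GoodD B) : GoodD (A * B) := by
  obtain ⟨hA0, hA00, hA11⟩ := hA; obtain ⟨hB0, hB00, hB11⟩ := hB
  refine ⟨hA0.mul hB0, ?_, ?_⟩ <;> rw [mul_apply2] <;>
    nlinarith [hA0 0 1, hA0 1 0, hB0 0 1, hB0 1 0]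

lemma goodD_one : GoodD 1 := by
  refine ⟨fun i j => ?_, by norm_num [Matrix.one_apply], by norm_num [Matrix.one_apply]⟩
  by_cases h : i = j <;> simp [Matrix.one_apply, h]

lemma Good.goodD {A : Mat} (h : Good A) : GoodD A := h.1

lemma good_LXR {L X R : Mat} (hL : GoodD L) (hX : Good X) (hR : GoodD R) :
    Good (L * (X * R)) := by
  obtain ⟨⟨hX0, hX00, hX11⟩, hX10⟩ := hX
  have hXR : Good (X * R) := by
    obtain ⟨hR0, hR00, hR11⟩ := hR
    refine ⟨⟨hX0.mul hR0, ?_, ?_⟩, ?_⟩ <;> rw [mul_apply2] <;>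
      nlinarith [hX0 0 1, hX0 1 0, hR0 0 1, hR0 1 0]
  obtain ⟨⟨hY0, hY00, hY11⟩, hY10⟩ := hXR
  obtain ⟨hL0, hL00, hL11⟩ := hL
  refine ⟨⟨hL0.mul hY0, ?_, ?_⟩, ?_⟩ <;> rw [mul_apply2] <;>
    nlinarith [hL0 0 1, hL0 1 0, hY0 0 1, hY0 1 0]

lemma mul_le2 {A A' B B' : Mat} (hA' : Nn A') (hB' : Nn B')
    (hA : Le2 A' A) (hB : Le2 B' B) : Le2 (A' * B') (A * B) := by
  intro i j; rw [mul_apply2, mul_apply2]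
  have h1 : A' i 0 * B' 0 j ≤ A i 0 * B 0 j :=
    mul_le_mul (hA i 0) (hB 0 j) (hB' 0 j) (le_trans (hA' i 0) (hA i 0))
  have h2 : A' i 1 * B' 1 j ≤ A i 1 * B 1 j :=
    mul_le_mul (hA i 1) (hB 1 j) (hB' 1 j) (le_trans (hA' i 1) (hA i 1))
  linarith

lemma le2_refl (A : Mat) : Le2 A A := fun _ _ => le_rfl

lemma strict01 {L X X' R : Mat} (hL : GoodD L) (hR : GoodD R) (hX' : Nn X')
    (hle : Le2 X' X) (h01 : X' 0 1 < X 0 1) :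
    (L * (X' * R)) 0 1 < (L * (X * R)) 0 1 := by
  obtain ⟨hL0, hL00, hL11⟩ := hL
  obtain ⟨hR0, hR00, hR11⟩ := hR
  have e1 : (L * (X' * R)) 0 1 = L 0 0 * (X' 0 0 * R 0 1 + X' 0 1 * R 1 1)
      + L 0 1 * (X' 1 0 * R 0 1 + X' 1 1 * R 1 1) := by
    rw [mul_apply2, mul_apply2, mul_apply2]
  have e2 : (L * (X * R)) 0 1 = L 0 0 * (X 0 0 * R 0 1 + X 0 1 * R 1 1)
      + L 0 1 * (X 1 0 * R 0 1 + X 1 1 * R 1 1) := by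
    rw [mul_apply2, mul_apply2, mul_apply2]
  rw [e1, e2]
  have k1 : X' 0 0 * R 0 1 ≤ X 0 0 * R 0 1 := mul_le_mul_of_nonneg_right (hle 0 0) (hR0 0 1)
  have k2 : X' 0 1 * R 1 1 < X 0 1 * R 1 1 := mul_lt_mul_of_pos_right h01 hR11
  have k3 : X' 1 0 * R 0 1 ≤ X 1 0 * R 0 1 := mul_le_mul_of_nonneg_right (hle 1 0) (hR0 0 1)
  have k4 : X' 1 1 * R 1 1 ≤ X 1 1 * R 1 1 := mul_le_mul_of_nonneg_right (hle 1 1) (hR0 1 1)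
  have m1 : L 0 0 * (X' 0 0 * R 0 1 + X' 0 1 * R 1 1) < L 0 0 * (X 0 0 * R 0 1 + X 0 1 * R 1 1) :=
    mul_lt_mul_of_pos_left (by linarith) hL00
  have m2 : L 0 1 * (X' 1 0 * R 0 1 + X' 1 1 * R 1 1) ≤ L 0 1 * (X 1 0 * R 0 1 + X 1 1 * R 1 1) :=
    mul_le_mul_of_nonneg_left (by linarith) (hL0 0 1)
  linarith

lemma prod_goodD : ∀ l : List Mat, (∀ M ∈ l, Good M) → GoodD l.prod := by
  intro l
  induction l with
  | nil => intro _; simpa using goodD_one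
  | cons a t ih =>
    intro h
    rw [List.prod_cons]
    exact ((h a (List.mem_cons_self)).goodD).mul (ih fun M hM => h M (List.mem_cons_of_mem a hM))

lemma mem_take_lt {n : ℕ} {i : ℕ} {x : Fin n} (hx : x ∈ (List.finRange n).take i) : (x : ℕ) < i := by
  rw [List.mem_iff_getElem] at hx
  obtain ⟨j, hj, rfl⟩ := hx
  have hj' : j < i := lt_of_lt_of_le hj (by simp [List.length_take])
  simp [hj']

lemma mem_drop_gt {n : ℕ} {i : ℕ} {x : Fin n} (hx : x ∈ (List.finRange n).drop (i + 1)) :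
    i < (x : ℕ) := by
  rw [List.mem_iff_getElem] at hx
  obtain ⟨j, hj, rfl⟩ := hx
  simp; omega

lemma prod_split {m : ℕ} (i : Fin (m + 1)) (g : Fin (m + 1) → Mat) :
    (((List.finRange (m + 1)).map g).reverse).prod =
      ((((List.finRange (m + 1)).drop ((i : ℕ) + 1)).map g).reverse).prod *
        (g i * ((((List.finRange (m + 1)).take (i : ℕ)).map g).reverse).prod) := by
  have hi : (i : ℕ) < (List.finRange (m + 1)).length := by
    rw [List.length_finRange]; exact i.isLt
  conv_lhs => rw [← List.take_append_drop (i : ℕ) (List.finRange (m + 1)),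
    List.drop_eq_getElem_cons hi]
  have hx : (List.finRange (m + 1))[(i : ℕ)] = i := by
    apply Fin.ext; simp
  rw [hx]
  simp [List.reverse_append, List.prod_append, mul_assoc]
lemma sqrt_lip (x y K : ℝ) (hK : 0 ≤ K) :
    Real.sqrt (x ^ 2 + K) ≤ Real.sqrt (y ^ 2 + K) + |x - y| := by
  have h1 : |y| ≤ Real.sqrt (y ^ 2 + K) := by
    rw [← Real.sqrt_sq_eq_abs]
    exact Real.sqrt_le_sqrt (by linarith)
  have h2 := Real.sqrt_nonneg (y ^ 2 + K)
  have h3 : (Real.sqrt (y ^ 2 + K)) ^ 2 = y ^ 2 + K := Real.sq_sqrt (by positivity)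
  rw [Real.sqrt_le_iff]
  constructor
  · positivity
  · nlinarith [le_abs_self (y * (x - y)), abs_mul y (x - y), abs_nonneg (x - y),
      mul_le_mul_of_nonneg_right h1 (abs_nonneg (x - y)), sq_abs (x - y)]

lemma perron_lt {a d b c a' d' b' c' : ℝ}
    (hb' : 0 ≤ b') (hc' : 0 ≤ c')
    (haa : a' ≤ a) (hdd : d' ≤ d) (hbb : b' < b) (hcc : c' ≤ c) (hc0 : 0 < c) :
    (a' + d' + Real.sqrt ((a' - d') ^ 2 + 4 * (b' * c'))) / 2 <
      (a + d + Real.sqrt ((a - d) ^ 2 + 4 * (b * c))) / 2 := by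
  have hK : b' * c' < b * c :=
    lt_of_le_of_lt (mul_le_mul_of_nonneg_left hcc hb') (mul_lt_mul_of_pos_right hbb hc0)
  have hKnn : 0 ≤ 4 * (b' * c') := by positivity
  have hbc : 0 ≤ 4 * (b * c) := by linarith
  have h1 : Real.sqrt ((a' - d') ^ 2 + 4 * (b' * c')) < Real.sqrt ((a' - d') ^ 2 + 4 * (b * c)) :=
    Real.sqrt_lt_sqrt (by positivity) (by linarith)
  have h2 : Real.sqrt ((a' - d') ^ 2 + 4 * (b * c)) + d' ≤
      Real.sqrt ((a' - d) ^ 2 + 4 * (b * c)) + d := by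
    have h := sqrt_lip (a' - d') (a' - d) (4 * (b * c)) hbc
    have habs : |a' - d' - (a' - d)| = d - d' := by
      rw [show a' - d' - (a' - d) = d - d' by ring, abs_of_nonneg (by linarith)]
    rw [habs] at h; linarith
  have h3 : Real.sqrt ((a' - d) ^ 2 + 4 * (b * c)) + a' ≤
      Real.sqrt ((a - d) ^ 2 + 4 * (b * c)) + a := by
    have h := sqrt_lip (a' - d) (a - d) (4 * (b * c)) hbc
    have habs : |a' - d - (a - d)| = a - a' := by
      rw [show a' - d - (a - d) = -(a - a') by ring, abs_neg, abs_of_nonneg (by linarith)]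
    rw [habs] at h; linarith
  linarith

lemma specRad_eq {a b c d : ℝ} (ha : 0 ≤ a) (hd : 0 ≤ d) (hb : 0 ≤ b) (hc : 0 ≤ c) :
    specRad !![a, b; c, d] = ENNReal.ofReal
      ((a + d + Real.sqrt ((a - d) ^ 2 + 4 * (b * c))) / 2) := by
  set s := Real.sqrt ((a - d) ^ 2 + 4 * (b * c)) with hs
  have hdisc : 0 ≤ (a - d) ^ 2 + 4 * (b * c) := by positivity
  have hs2 : s ^ 2 = (a - d) ^ 2 + 4 * (b * c) := Real.sq_sqrt hdisc
  have hs0 : 0 ≤ s := Real.sqrt_nonneg _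
  have hsabs : |a - d| ≤ s := by
    rw [hs, ← Real.sqrt_sq_eq_abs]
    exact Real.sqrt_le_sqrt (by nlinarith [mul_nonneg hb hc])
  obtain ⟨had1, had2⟩ := abs_le.mp hsabs
  have hlam0 : 0 ≤ (a + d + s) / 2 := by linarith
  have hr1 : (a + d + s) / 2 + (a + d - s) / 2 = a + d := by ring
  have hr2 : ((a + d + s) / 2) * ((a + d - s) / 2) = a * d - b * c := by nlinarith [hs2]
  have hspec : spectrum ℂ ((!![a, b; c, d] : Matrix (Fin 2) (Fin 2) ℝ).map Complex.ofReal)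
      = {((((a + d + s) / 2) : ℝ) : ℂ), ((((a + d - s) / 2) : ℝ) : ℂ)} := by
    ext z
    rw [spectrum.mem_iff, Matrix.isUnit_iff_isUnit_det, isUnit_iff_ne_zero, not_not]
    have hdet : (algebraMap ℂ (Matrix (Fin 2) (Fin 2) ℂ) z
          - (!![a, b; c, d] : Matrix (Fin 2) (Fin 2) ℝ).map Complex.ofReal).det
        = (z - ((((a + d + s) / 2) : ℝ) : ℂ)) * (z - ((((a + d - s) / 2) : ℝ) : ℂ)) := by
      rw [Matrix.det_fin_two]
      simp only [Matrix.sub_apply, Matrix.map_apply, Matrix.algebraMap_matrix_apply,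
        Matrix.cons_val', Matrix.cons_val_zero, Matrix.cons_val_one, Matrix.head_cons,
        Matrix.head_fin_const, Matrix.empty_val', Matrix.cons_val_fin_one]
      have cs : ((s : ℂ)) ^ 2 = ((a : ℂ) - d) ^ 2 + 4 * (b * c) := by
        exact_mod_cast congrArg Complex.ofReal hs2
      norm_num
      push_cast
      linear_combination (1 / 4 : ℂ) * cs
    rw [hdet]
    simp only [Set.mem_insert_iff, Set.mem_singleton_iff, mul_eq_zero, sub_eq_zero]
  rw [specRad, spectralRadius, hspec]
  apply le_antisymm
  · refine iSup₂_le fun z hz => ?_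
    rcases hz with hz | hz
    · rw [hz, Complex.nnnorm_real, ← enorm_eq_nnnorm, Real.enorm_eq_ofReal hlam0]
    · rw [Set.mem_singleton_iff] at hz
      rw [hz, Complex.nnnorm_real, ← enorm_eq_nnnorm, Real.enorm_eq_ofReal_abs]
      exact ENNReal.ofReal_le_ofReal (abs_le.mpr ⟨by linarith, by linarith⟩)
  · refine le_iSup₂_of_le ((((a + d + s) / 2 : ℝ)) : ℂ) (Set.mem_insert _ _) ?_
    rw [Complex.nnnorm_real, ← enorm_eq_nnnorm, Real.enorm_eq_ofReal hlam0]

lemma specRad_eq' (M : Mat) (ha : 0 ≤ M 0 0) (hd : 0 ≤ M 1 1) (hb : 0 ≤ M 0 1)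
    (hc : 0 ≤ M 1 0) :
    specRad M = ENNReal.ofReal
      ((M 0 0 + M 1 1 + Real.sqrt ((M 0 0 - M 1 1) ^ 2 + 4 * (M 0 1 * M 1 0))) / 2) := by
  have h := specRad_eq ha hd hb hc
  rwa [← Matrix.eta_fin_two M] at h

end SpecAux

/-- Increasing one of the efficiencies `e_i` (within the admissible range) strictly decreases
the spectral radius of `Φ(E,P)`. -/
theorem specRad_PhiPC_anti_in_e (β γ k T₀ N τ : ℝ) (hβ : 0 < β) (hγ : 0 < γ) (hk : 0 < k)
    (hT₀ : 0 < T₀) (hN : 0 < N) (hτ : 0 < τ) (m : ℕ) (hm : 1 ≤ m)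
    (e : Fin (m + 1) → ℝ) (p : Fin (m + 2) → ℝ)
    (hp0 : p 0 = 0) (hpτ : p (Fin.last (m + 1)) = τ) (hpmono : StrictMono p)
    (he1 : e 0 ≤ 1) (heN : 0 ≤ e (Fin.last m)) (heanti : StrictAnti e)
    (i : Fin (m + 1)) (e' : ℝ) (hlt : e i < e')
    (hub0 : (i : ℕ) = 0 → e' ≤ 1)
    (hub : ∀ j : Fin (m + 1), (j : ℕ) + 1 = (i : ℕ) → e' < e j) :
    specRad (PhiPC β γ k T₀ N m (Function.update e i e') p) <
      specRad (PhiPC β γ k T₀ N m e p) := by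
  classical
  have hΔ : ∀ j : Fin (m + 1), 0 < p j.succ - p j.castSucc :=
    fun j => sub_pos.mpr (hpmono (Fin.castSucc_lt_succ (i := j)))
  have he_le : ∀ j, e j ≤ 1 := fun j => le_trans (heanti.antitone (Fin.zero_le j)) he1
  have he'le : e' ≤ 1 := by
    rcases Nat.eq_zero_or_pos (i : ℕ) with h0 | hpos
    · exact hub0 h0
    · have hjlt : (i : ℕ) - 1 < m + 1 := by omega
      exact le_trans (hub ⟨(i : ℕ) - 1, hjlt⟩ (by simp; omega)).le (he_le _)
  set f : Fin (m + 1) → SpecAux.Mat :=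
    fun j => mexp ((p j.succ - p j.castSucc) • Amat β γ k T₀ N (e j)) with hfdef
  set f' : Fin (m + 1) → SpecAux.Mat :=
    fun j => mexp ((p j.succ - p j.castSucc) • Amat β γ k T₀ N (Function.update e i e' j))
    with hf'def
  have hgood : ∀ j, SpecAux.Good (f j) :=
    fun j => SpecAux.factor_good hβ hγ hk hT₀ hN (hΔ j) (he_le j)
  have hf'i : f' i = mexp ((p i.succ - p i.castSucc) • Amat β γ k T₀ N e') := by
    rw [hf'def]; simp only [Function.update_self]
  have hgood' : SpecAux.Good (f' i) := by
    rw [hf'i]; exact SpecAux.factor_good hβ hγ hk hT₀ hN (hΔ i) he'le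
  have hfactor := SpecAux.factor_le hβ hγ hk hT₀ hN (hΔ i) he'le hlt
  have hfle : SpecAux.Le2 (f' i) (f i) := by rw [hf'i]; exact hfactor.1
  have hflt : f' i 0 1 < f i 0 1 := by rw [hf'i]; exact hfactor.2
  set l := List.finRange (m + 1) with hl
  set L : SpecAux.Mat := (((l.drop ((i : ℕ) + 1)).map f).reverse).prod with hLdef
  set R : SpecAux.Mat := (((l.take (i : ℕ)).map f).reverse).prod with hRdef
  have hLgood : SpecAux.GoodD L := by
    apply SpecAux.prod_goodD
    intro M hM
    rw [List.mem_reverse, List.mem_map] at hM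
    obtain ⟨j, _, rfl⟩ := hM
    exact hgood j
  have hRgood : SpecAux.GoodD R := by
    apply SpecAux.prod_goodD
    intro M hM
    rw [List.mem_reverse, List.mem_map] at hM
    obtain ⟨j, _, rfl⟩ := hM
    exact hgood j
  have hsplitP : PhiPC β γ k T₀ N m e p = L * (f i * R) := by
    rw [PhiPC]
    exact SpecAux.prod_split i f
  have hsplitP' : PhiPC β γ k T₀ N m (Function.update e i e') p = L * (f' i * R) := by
    rw [PhiPC]
    have h1 := SpecAux.prod_split i f'
    rw [h1]
    have hdropeq : (l.drop ((i : ℕ) + 1)).map f' = (l.drop ((i : ℕ) + 1)).map f := by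
      apply List.map_congr_left
      intro x hx
      have hgt := SpecAux.mem_drop_gt (hl ▸ hx)
      have hne : x ≠ i := fun h => by rw [h] at hgt; omega
      rw [hf'def, hfdef]
      simp only [Function.update_of_ne hne]
    have htakeeq : (l.take (i : ℕ)).map f' = (l.take (i : ℕ)).map f := by
      apply List.map_congr_left
      intro x hx
      have hlt' := SpecAux.mem_take_lt (hl ▸ hx)
      have hne : x ≠ i := fun h => by rw [h] at hlt'; omega
      rw [hf'def, hfdef]
      simp only [Function.update_of_ne hne]
    rw [hdropeq, htakeeq]
  have hPgood : SpecAux.Good (L * (f i * R)) := SpecAux.good_LXR hLgood (hgood i) hRgood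
  have hP'good : SpecAux.Good (L * (f' i * R)) := SpecAux.good_LXR hLgood hgood' hRgood
  have hYnn : SpecAux.Nn (f' i * R) := SpecAux.Nn.mul hgood'.1.1 hRgood.1
  have hle2 : SpecAux.Le2 (L * (f' i * R)) (L * (f i * R)) :=
    SpecAux.mul_le2 hLgood.1 hYnn (SpecAux.le2_refl L)
      (SpecAux.mul_le2 hgood'.1.1 hRgood.1 hfle (SpecAux.le2_refl R))
  have h01 : (L * (f' i * R)) 0 1 < (L * (f i * R)) 0 1 :=
    SpecAux.strict01 hLgood hRgood hgood'.1.1 hfle hflt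
  rw [hsplitP, hsplitP']
  obtain ⟨⟨hPnn, hP00, hP11⟩, hP10⟩ := hPgood
  obtain ⟨⟨hP'nn, hP'00, hP'11⟩, hP'10⟩ := hP'good
  rw [SpecAux.specRad_eq' _ hP00.le hP11.le (hPnn 0 1) hP10.le,
    SpecAux.specRad_eq' _ hP'00.le hP'11.le (hP'nn 0 1) hP'10.le]
  have hq : 0 < ((L * (f i * R)) 0 0 + (L * (f i * R)) 1 1 +
      Real.sqrt (((L * (f i * R)) 0 0 - (L * (f i * R)) 1 1) ^ 2 +
        4 * ((L * (f i * R)) 0 1 * (L * (f i * R)) 1 0))) / 2 := by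
    have := Real.sqrt_nonneg (((L * (f i * R)) 0 0 - (L * (f i * R)) 1 1) ^ 2 +
        4 * ((L * (f i * R)) 0 1 * (L * (f i * R)) 1 0))
    linarith
  rw [ENNReal.ofReal_lt_ofReal_iff hq]
  exact SpecAux.perron_lt (hP'nn 0 1) (hP'nn 1 0) (hle2 0 0) (hle2 1 1) h01 (hle2 1 0) hP10
end
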